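/- arXiv:2009.06427 — 6 statements merged into one kernel-verified Lean document; each statement's English description precedes it below -/
import Mathlib

section
/- Let (V, ξ, x⁺, x⁻) be a finite-dimensional representation of the Yangian Y_ħ(sl₂). Then the sets of poles of the three End(V)-valued rational functions coincide: σ(ξ) = σ(x⁺) = σ(x⁻). Moreover, for every z ∈ ℂ the order of the pole of ξ at z equals the order of the pole of x⁺ at z, and equals the order of the pole of x⁻ at z. -/
open Filter Topology Polynomial

noncomputable section

/-- An `End(V)`-valued rational function on `ℂ`, presented as `N(u)/d(u)` where `N` is a
polynomial with coefficients in the continuous endomorphisms of `V` and `d` is a nonzero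
scalar polynomial. -/
structure EndRatData (V : Type) [NormedAddCommGroup V] [NormedSpace ℂ V] where
  num : Polynomial (V →L[ℂ] V)
  den : Polynomial ℂ
  den_ne : den ≠ 0

namespace EndRatData

variable {V : Type} [NormedAddCommGroup V] [NormedSpace ℂ V]

/-- The value `N(u)/d(u)` of the rational function at `u`. -/
def eval (f : EndRatData V) (u : ℂ) : V →L[ℂ] V :=
  (f.den.eval u)⁻¹ • f.num.eval (u • (1 : V →L[ℂ] V))

/-- The set where the presentation `N(u)/d(u)` is defined. -/
def Dom (f : EndRatData V) (u : ℂ) : Prop := f.den.eval u ≠ 0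

/-- A function `g : ℂ → End(V)` is bounded near `z` (on a punctured neighbourhood). -/
def BddNearOn (g : ℂ → (V →L[ℂ] V)) (z : ℂ) : Prop :=
  ∃ ε > (0 : ℝ), ∃ C : ℝ, ∀ u : ℂ, u ≠ z → dist u z < ε → ‖g u‖ ≤ C

/-- `z` is a pole of `f` iff `f` is unbounded on every punctured neighbourhood of `z`. -/
def IsPole (f : EndRatData V) (z : ℂ) : Prop := ¬ BddNearOn f.eval z

/-- The set of poles of `f`. -/
def poles (f : EndRatData V) : Set ℂ := {z | f.IsPole z}

/-- The order of the pole of `f` at `z`: the least `k ≥ 0` such that `(u - z)^k • f(u)`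
is bounded near `z`. -/
def order (f : EndRatData V) (z : ℂ) : ℕ :=
  sInf {k : ℕ | BddNearOn (fun u => (u - z) ^ k • f.eval u) z}

end EndRatData

namespace YangAux
open EndRatData


lemma eventually_not_mem_finite {F : Set ℂ} (hF : F.Finite) (z : ℂ) :
    ∀ᶠ u in 𝓝[≠] z, u ∉ F := by
  have h1 : IsClosed (F \ {z}) := (hF.subset Set.diff_subset).isClosed
  have h2 : (F \ {z})ᶜ ∈ 𝓝 z := h1.isOpen_compl.mem_nhds (by simp)
  have h3 : (F \ {z})ᶜ ∈ 𝓝[≠] z := nhdsWithin_le_nhds h2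
  filter_upwards [h3, self_mem_nhdsWithin] with u hu hne huF
  exact hu ⟨huF, hne⟩

lemma eventually_cocompact_not_mem {F : Set ℂ} (hF : F.Finite) :
    ∀ᶠ u in cocompact ℂ, u ∉ F :=
  mem_cocompact.2 ⟨F, hF.isCompact, fun _ hu => hu⟩

lemma bdd_of_tendsto' {α E : Type*} [SeminormedAddCommGroup E] {l : Filter α} {g : α → E} {L : E}
    (h : Tendsto g l (𝓝 L)) : ∃ C, ∀ᶠ u in l, ‖g u‖ ≤ C :=
  ⟨‖L‖ + 1, h.norm.eventually_le_const (by linarith)⟩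

lemma poly_decomp (q : ℂ[X]) (hq : q ≠ 0) (z : ℂ) :
    (∀ u, q.eval u = (u - z) ^ (q.rootMultiplicity z) *
      (q /ₘ (X - C z) ^ (q.rootMultiplicity z)).eval u) ∧
      (q /ₘ (X - C z) ^ (q.rootMultiplicity z)).eval z ≠ 0 := by
  refine ⟨fun u => ?_, eval_divByMonic_pow_rootMultiplicity_ne_zero z hq⟩
  conv_lhs => rw [← pow_mul_divByMonic_rootMultiplicity_eq q z]
  simp [eval_mul, eval_pow]

lemma scalar_tendsto {q d : ℂ[X]} (hq : q ≠ 0) (hd : d ≠ 0) (z : ℂ) (k : ℕ)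
    (hk : d.rootMultiplicity z ≤ k + q.rootMultiplicity z) :
    Tendsto (fun u => (u - z) ^ k * (q.eval u / d.eval u)) (𝓝[≠] z)
      (𝓝 ((0:ℂ) ^ (k + q.rootMultiplicity z - d.rootMultiplicity z) *
        ((q /ₘ (X - C z) ^ (q.rootMultiplicity z)).eval z /
         (d /ₘ (X - C z) ^ (d.rootMultiplicity z)).eval z))) := by
  obtain ⟨hqdec, hqz⟩ := poly_decomp q hq z
  obtain ⟨hddec, hdz⟩ := poly_decomp d hd z
  set qt := q /ₘ (X - C z) ^ (q.rootMultiplicity z)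
  set dt := d /ₘ (X - C z) ^ (d.rootMultiplicity z)
  have hdtne : ∀ᶠ u in 𝓝[≠] z, dt.eval u ≠ 0 :=
    nhdsWithin_le_nhds ((dt.continuous.tendsto z).eventually_ne hdz)
  have hlim : Tendsto (fun u => (u - z) ^ (k + q.rootMultiplicity z - d.rootMultiplicity z) *
      (qt.eval u / dt.eval u)) (𝓝[≠] z)
      (𝓝 ((0:ℂ) ^ (k + q.rootMultiplicity z - d.rootMultiplicity z) *
        (qt.eval z / dt.eval z))) := by
    have : ContinuousAt (fun u => (u - z) ^ (k + q.rootMultiplicity z - d.rootMultiplicity z) *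
        (qt.eval u / dt.eval u)) z := by
      exact ((continuousAt_id.sub continuousAt_const).pow _).mul
        ((qt.continuous.continuousAt).div (dt.continuous.continuousAt) hdz)
    have h2 := this.tendsto.mono_left (nhdsWithin_le_nhds (s := {z}ᶜ))
    simpa using h2
  refine hlim.congr' ?_
  filter_upwards [hdtne, self_mem_nhdsWithin] with u hdt hu
  have hne : u - z ≠ 0 := sub_ne_zero.2 hu
  have hpow : (u - z) ^ (k + q.rootMultiplicity z) =
      (u - z) ^ (k + q.rootMultiplicity z - d.rootMultiplicity z) *
        (u - z) ^ (d.rootMultiplicity z) := by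
    rw [← pow_add, Nat.sub_add_cancel hk]
  rw [hqdec u, hddec u]
  field_simp
  rw [show (u - z) ^ (k + q.rootMultiplicity z - d.rootMultiplicity z) * eval u qt *
      (u - z) ^ d.rootMultiplicity z =
      eval u qt * ((u - z) ^ (k + q.rootMultiplicity z - d.rootMultiplicity z) *
        (u - z) ^ d.rootMultiplicity z) by ring, ← hpow, pow_add]
  ring


lemma scalar_unbounded {q d : ℂ[X]} (hq : q ≠ 0) (hd : d ≠ 0) (z : ℂ) (k : ℕ)
    (hk : k + q.rootMultiplicity z < d.rootMultiplicity z) :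
    ¬ ∃ C, ∀ᶠ u in 𝓝[≠] z, ‖(u - z) ^ k * (q.eval u / d.eval u)‖ ≤ C := by
  obtain ⟨hqdec, hqz⟩ := poly_decomp q hq z
  obtain ⟨hddec, hdz⟩ := poly_decomp d hd z
  set qt := q /ₘ (X - C z) ^ (q.rootMultiplicity z) with hqt
  set dt := d /ₘ (X - C z) ^ (d.rootMultiplicity z) with hdt
  set e : ℕ := d.rootMultiplicity z - (k + q.rootMultiplicity z) with he
  have hdtne : ∀ᶠ u in 𝓝[≠] z, dt.eval u ≠ 0 :=
    nhdsWithin_le_nhds ((dt.continuous.tendsto z).eventually_ne hdz)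
  -- the function has norm tending to atTop
  have heq : ∀ᶠ u in 𝓝[≠] z, ‖(u - z) ^ k * (q.eval u / d.eval u)‖ =
      ‖qt.eval u‖ * (‖(u - z) ^ e * dt.eval u‖)⁻¹ := by
    filter_upwards [hdtne, self_mem_nhdsWithin] with u hdtu hu
    have hne : u - z ≠ 0 := sub_ne_zero.2 hu
    have hval : (u - z) ^ k * (q.eval u / d.eval u) = qt.eval u / ((u - z) ^ e * dt.eval u) := by
      rw [hqdec u, hddec u]
      have hpow : (u - z) ^ (d.rootMultiplicity z) =
          (u - z) ^ e * (u - z) ^ (k + q.rootMultiplicity z) := by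
        rw [← pow_add, he, Nat.sub_add_cancel hk.le]
      rw [hpow]
      field_simp
      ring
    rw [hval, div_eq_mul_inv, norm_mul, norm_inv]
  have hnum : Tendsto (fun u => ‖qt.eval u‖) (𝓝[≠] z) (𝓝 ‖qt.eval z‖) :=
    ((qt.continuous.norm).tendsto z).mono_left nhdsWithin_le_nhds
  have hden0 : Tendsto (fun u => ‖(u - z) ^ e * dt.eval u‖) (𝓝[≠] z) (𝓝[>] (0:ℝ)) := by
    have he1 : 1 ≤ e := by omega
    have h0 : Tendsto (fun u => ‖(u - z) ^ e * dt.eval u‖) (𝓝[≠] z) (𝓝 0) := by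
      have : ContinuousAt (fun u : ℂ => (u - z) ^ e * dt.eval u) z :=
        ((continuousAt_id.sub continuousAt_const).pow _).mul dt.continuous.continuousAt
      have h2 := (this.tendsto.mono_left (nhdsWithin_le_nhds (s := {z}ᶜ))).norm
      simpa [sub_self, zero_pow (by omega : e ≠ 0)] using h2
    rw [tendsto_nhdsWithin_iff]
    refine ⟨h0, ?_⟩
    filter_upwards [hdtne, self_mem_nhdsWithin] with u hdtu hu
    have hne : u - z ≠ 0 := sub_ne_zero.2 hu
    exact Set.mem_Ioi.2 (norm_pos_iff.2 (mul_ne_zero (pow_ne_zero _ hne) hdtu))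
  have hinv : Tendsto (fun u => (‖(u - z) ^ e * dt.eval u‖)⁻¹) (𝓝[≠] z) atTop :=
    tendsto_inv_nhdsGT_zero.comp hden0
  have hat : Tendsto (fun u => ‖(u - z) ^ k * (q.eval u / d.eval u)‖) (𝓝[≠] z) atTop :=
    (Tendsto.pos_mul_atTop (norm_pos_iff.2 hqz) hnum hinv).congr'
      (heq.mono fun u h => h.symm)
  rintro ⟨C, hC⟩
  obtain ⟨u, hu1, hu2⟩ := (hC.and (hat.eventually (eventually_gt_atTop C))).exists
  exact absurd hu1 (not_le.2 hu2)

lemma scalar_bdd_iff {q d : ℂ[X]} (hq : q ≠ 0) (hd : d ≠ 0) (z : ℂ) (k : ℕ) :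
    (∃ C, ∀ᶠ u in 𝓝[≠] z, ‖(u - z) ^ k * (q.eval u / d.eval u)‖ ≤ C) ↔
      d.rootMultiplicity z ≤ k + q.rootMultiplicity z := by
  constructor
  · intro h
    by_contra hcon
    exact scalar_unbounded hq hd z k (not_le.1 hcon) h
  · intro h
    exact bdd_of_tendsto' (scalar_tendsto hq hd z k h)



variable {V : Type} [NormedAddCommGroup V] [NormedSpace ℂ V]

lemma bddNearOn_iff {g : ℂ → V →L[ℂ] V} {z : ℂ} :
    BddNearOn g z ↔ ∃ C, ∀ᶠ u in 𝓝[≠] z, ‖g u‖ ≤ C := by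
  constructor
  · rintro ⟨ε, hε, C, hC⟩
    refine ⟨C, ?_⟩
    have hmem : {z}ᶜ ∩ Metric.ball z ε ∈ 𝓝[≠] z :=
      inter_mem_nhdsWithin _ (Metric.ball_mem_nhds z hε)
    filter_upwards [hmem] with u hu
    exact hC u hu.1 (Metric.mem_ball.1 hu.2)
  · rintro ⟨C, hC⟩
    obtain ⟨ε, hε, hsub⟩ := Metric.mem_nhdsWithin_iff.1 hC
    exact ⟨ε, hε, C, fun u hne hd => hsub ⟨Metric.mem_ball.2 hd, hne⟩⟩

/-- The numerator as a function of `u`. -/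
lemma num_eval_eq (f : EndRatData V) (u : ℂ) :
    f.num.eval (u • (1 : V →L[ℂ] V)) =
      ∑ i ∈ Finset.range (f.num.natDegree + 1), u ^ i • f.num.coeff i := by
  rw [Polynomial.eval_eq_sum_range]
  refine Finset.sum_congr rfl fun i _ => ?_
  rw [_root_.smul_pow, one_pow, mul_smul_comm, mul_one]

lemma continuous_num_eval (f : EndRatData V) :
    Continuous fun u : ℂ => f.num.eval (u • (1 : V →L[ℂ] V)) := by
  have : (fun u : ℂ => f.num.eval (u • (1 : V →L[ℂ] V))) =
      fun u => ∑ i ∈ Finset.range (f.num.natDegree + 1), u ^ i • f.num.coeff i := by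
    funext u; exact num_eval_eq f u
  rw [this]
  exact continuous_finset_sum _ fun i _ => (continuous_pow i).smul continuous_const

def coordPoly (f : EndRatData V) (φ : (V →L[ℂ] V) →ₗ[ℂ] ℂ) : ℂ[X] :=
  ∑ i ∈ Finset.range (f.num.natDegree + 1), C (φ (f.num.coeff i)) * X ^ i

lemma coordPoly_eval (f : EndRatData V) (φ : (V →L[ℂ] V) →ₗ[ℂ] ℂ) (u : ℂ) :
    φ (f.eval u) = (coordPoly f φ).eval u / f.den.eval u := by
  rw [EndRatData.eval, map_smul, num_eval_eq, map_sum, coordPoly, eval_finset_sum]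
  rw [smul_eq_mul, div_eq_inv_mul]
  congr 1
  refine Finset.sum_congr rfl fun i _ => ?_
  rw [map_smul, smul_eq_mul, eval_mul, eval_C, eval_pow, eval_X, mul_comm]

/-- The set of exponents making `f` bounded near `z`. -/
def Sset (f : EndRatData V) (z : ℂ) : Set ℕ :=
  {k | BddNearOn (fun u => (u - z) ^ k • f.eval u) z}

lemma order_def (f : EndRatData V) (z : ℂ) : f.order z = sInf (Sset f z) := rfl

lemma Sset_nonempty (f : EndRatData V) (z : ℂ) :
    f.den.rootMultiplicity z ∈ Sset f z := by
  obtain ⟨hddec, hdz⟩ := poly_decomp f.den f.den_ne z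
  set dt := f.den /ₘ (X - C z) ^ (f.den.rootMultiplicity z) with hdt
  have hdtne : ∀ᶠ u in 𝓝[≠] z, dt.eval u ≠ 0 :=
    nhdsWithin_le_nhds ((dt.continuous.tendsto z).eventually_ne hdz)
  have hlim : Tendsto (fun u => (dt.eval u)⁻¹ • f.num.eval (u • (1 : V →L[ℂ] V))) (𝓝[≠] z)
      (𝓝 ((dt.eval z)⁻¹ • f.num.eval (z • 1))) := by
    refine Tendsto.smul ?_ ((continuous_num_eval f).tendsto z |>.mono_left nhdsWithin_le_nhds)
    exact (((dt.continuous.tendsto z).inv₀ hdz).mono_left nhdsWithin_le_nhds)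
  have heq : ∀ᶠ u in 𝓝[≠] z, (u - z) ^ (f.den.rootMultiplicity z) • f.eval u =
      (dt.eval u)⁻¹ • f.num.eval (u • (1 : V →L[ℂ] V)) := by
    filter_upwards [hdtne, self_mem_nhdsWithin] with u hdtu hu
    have hne : u - z ≠ 0 := sub_ne_zero.2 hu
    rw [EndRatData.eval, smul_smul, hddec u, mul_inv, ← mul_assoc,
      mul_inv_cancel₀ (pow_ne_zero _ hne), one_mul]
  rw [Sset, Set.mem_setOf_eq, bddNearOn_iff]
  exact bdd_of_tendsto' (hlim.congr' (heq.mono fun u h => h.symm))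

lemma Sset_upward {f : EndRatData V} {z : ℂ} {k j : ℕ} (hk : k ∈ Sset f z) (hkj : k ≤ j) :
    j ∈ Sset f z := by
  rw [Sset, Set.mem_setOf_eq, bddNearOn_iff] at hk ⊢
  obtain ⟨C, hC⟩ := hk
  have hball : ∀ᶠ u in 𝓝[≠] z, ‖u - z‖ ≤ 1 := by
    have : ∀ᶠ u in 𝓝 z, u ∈ Metric.ball z 1 := Metric.ball_mem_nhds z one_pos
    exact nhdsWithin_le_nhds (this.mono fun u hu => by
      rw [Metric.mem_ball, dist_eq_norm] at hu; exact hu.le)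
  refine ⟨max C 0, ?_⟩
  filter_upwards [hC, hball] with u hu hb
  have : (u - z) ^ j • f.eval u = (u - z) ^ (j - k) • ((u - z) ^ k • f.eval u) := by
    rw [smul_smul, ← pow_add, Nat.sub_add_cancel hkj]
  rw [this, norm_smul ((u - z) ^ (j - k)) ((u - z) ^ k • f.eval u)]
  have h1 : ‖(u - z) ^ (j - k)‖ ≤ 1 := by
    rw [norm_pow]; exact pow_le_one₀ (norm_nonneg _) hb
  calc ‖(u - z) ^ (j - k)‖ * ‖(u - z) ^ k • f.eval u‖ ≤ 1 * max C 0 := by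
        apply mul_le_mul h1 (hu.trans (le_max_left _ _)) (norm_nonneg _) zero_le_one
    _ = max C 0 := one_mul _

lemma Sset_tendsto_zero {f : EndRatData V} {z : ℂ} {k j : ℕ} (hk : k ∈ Sset f z) (hkj : k < j) :
    Tendsto (fun u => (u - z) ^ j • f.eval u) (𝓝[≠] z) (𝓝 0) := by
  rw [Sset, Set.mem_setOf_eq, bddNearOn_iff] at hk
  obtain ⟨C, hC⟩ := hk
  have heq : (fun u => (u - z) ^ j • f.eval u) =
      fun u => (u - z) ^ (j - k) • ((u - z) ^ k • f.eval u) := by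
    funext u; rw [smul_smul, ← pow_add, Nat.sub_add_cancel hkj.le]
  rw [heq]
  refine Tendsto.zero_smul_isBoundedUnder_le ?_ ⟨C, eventually_map.2 hC⟩
  have : ContinuousAt (fun u : ℂ => (u - z) ^ (j - k)) z :=
    (continuousAt_id.sub continuousAt_const).pow _
  have h2 := this.tendsto.mono_left (nhdsWithin_le_nhds (s := {z}ᶜ))
  simpa [sub_self, zero_pow (by omega : j - k ≠ 0)] using h2


variable [FiniteDimensional ℂ V]

lemma coord_bdd_of_bdd {f : EndRatData V} {z : ℂ} {k : ℕ} (hk : k ∈ Sset f z)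
    (φ : (V →L[ℂ] V) →ₗ[ℂ] ℂ) :
    ∃ C, ∀ᶠ u in 𝓝[≠] z, ‖(u - z) ^ k * ((coordPoly f φ).eval u / f.den.eval u)‖ ≤ C := by
  rw [Sset, Set.mem_setOf_eq, bddNearOn_iff] at hk
  obtain ⟨C, hC⟩ := hk
  set φL := LinearMap.toContinuousLinearMap φ with hφL
  refine ⟨‖φL‖ * max C 0, ?_⟩
  filter_upwards [hC] with u hu
  have h1 : (u - z) ^ k * ((coordPoly f φ).eval u / f.den.eval u) =
      φ ((u - z) ^ k • f.eval u) := by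
    rw [map_smul, smul_eq_mul, coordPoly_eval]
  rw [h1]
  calc ‖φ ((u - z) ^ k • f.eval u)‖ = ‖φL ((u - z) ^ k • f.eval u)‖ := rfl
    _ ≤ ‖φL‖ * ‖(u - z) ^ k • f.eval u‖ := φL.le_opNorm _
    _ ≤ ‖φL‖ * max C 0 := by
        exact mul_le_mul_of_nonneg_left (hu.trans (le_max_left _ _)) (norm_nonneg φL)

lemma repr_smul_eval (f : EndRatData V) {ι : Type*} (b : Module.Basis ι ℂ (V →L[ℂ] V))
    (z : ℂ) (k : ℕ) (j : ι) (u : ℂ) :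
    b.repr ((u - z) ^ k • f.eval u) j =
      (u - z) ^ k * ((coordPoly f (b.coord j)).eval u / f.den.eval u) := by
  rw [map_smul, Finsupp.smul_apply, smul_eq_mul, ← coordPoly_eval]
  rw [Module.Basis.coord_apply]

lemma bdd_of_coord_bdd {f : EndRatData V} {z : ℂ} {k : ℕ} {ι : Type*} [Fintype ι]
    (b : Module.Basis ι ℂ (V →L[ℂ] V))
    (h : ∀ j, ∃ C, ∀ᶠ u in 𝓝[≠] z,
      ‖(u - z) ^ k * ((coordPoly f (b.coord j)).eval u / f.den.eval u)‖ ≤ C) :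
    k ∈ Sset f z := by
  choose C hC using h
  rw [Sset, Set.mem_setOf_eq, bddNearOn_iff]
  refine ⟨∑ j, max (C j) 0 * ‖b j‖, ?_⟩
  have hall : ∀ᶠ u in 𝓝[≠] z, ∀ j, ‖(u - z) ^ k *
      ((coordPoly f (b.coord j)).eval u / f.den.eval u)‖ ≤ C j := eventually_all.2 hC
  filter_upwards [hall] with u hu
  calc ‖(u - z) ^ k • f.eval u‖
      = ‖∑ j, b.repr ((u - z) ^ k • f.eval u) j • b j‖ := by rw [b.sum_repr]
    _ ≤ ∑ j, ‖b.repr ((u - z) ^ k • f.eval u) j • b j‖ := norm_sum_le _ _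
    _ ≤ ∑ j, max (C j) 0 * ‖b j‖ := by
        refine Finset.sum_le_sum fun j _ => ?_
        rw [norm_smul (b.repr ((u - z) ^ k • f.eval u) j) (b j)]
        refine mul_le_mul_of_nonneg_right ?_ (norm_nonneg _)
        rw [repr_smul_eval]
        exact (hu j).trans (le_max_left _ _)

lemma exists_leadCoeff (f : EndRatData V) (z : ℂ) (a : ℕ) (ha1 : 1 ≤ a)
    (haS : a ∈ Sset f z) (ha' : (a - 1) ∉ Sset f z) :
    ∃ A : V →L[ℂ] V, A ≠ 0 ∧
      Tendsto (fun u => (u - z) ^ a • f.eval u) (𝓝[≠] z) (𝓝 A) := by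
  classical
  set b : Module.Basis (Fin (Module.finrank ℂ (V →L[ℂ] V))) ℂ (V →L[ℂ] V) :=
    Module.finBasis ℂ (V →L[ℂ] V) with hb
  set d := f.den with hd
  set q : Fin (Module.finrank ℂ (V →L[ℂ] V)) → ℂ[X] :=
    fun j => coordPoly f (b.coord j) with hq
  have hco : ∀ j, ∃ L : ℂ,
      Tendsto (fun u => (u - z) ^ a * ((q j).eval u / d.eval u)) (𝓝[≠] z) (𝓝 L) ∧
      ((¬ ∃ C, ∀ᶠ u in 𝓝[≠] z, ‖(u - z) ^ (a - 1) * ((q j).eval u / d.eval u)‖ ≤ C) →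
        L ≠ 0) := by
    intro j
    by_cases hqj : q j = 0
    · refine ⟨0, ?_, fun hun => absurd ⟨0, ?_⟩ hun⟩
      · have : (fun u => (u - z) ^ a * ((q j).eval u / d.eval u)) = fun _ => 0 := by
          funext u; simp [hqj]
        rw [this]; exact tendsto_const_nhds
      · filter_upwards with u; simp [hqj]
    · have hbdd := coord_bdd_of_bdd haS (b.coord j)
      have hge : d.rootMultiplicity z ≤ a + (q j).rootMultiplicity z :=
        (scalar_bdd_iff hqj f.den_ne z a).1 hbdd
      refine ⟨_, scalar_tendsto hqj f.den_ne z a hge, fun hun => ?_⟩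
      have hlt : (a - 1) + (q j).rootMultiplicity z < d.rootMultiplicity z := by
        by_contra hcon
        exact hun ((scalar_bdd_iff hqj f.den_ne z (a - 1)).2 (not_lt.1 hcon))
      have heqm : a + (q j).rootMultiplicity z - d.rootMultiplicity z = 0 := by omega
      rw [heqm, pow_zero, one_mul]
      exact div_ne_zero (poly_decomp (q j) hqj z).2 (poly_decomp d f.den_ne z).2
  choose L hL hLne using hco
  refine ⟨∑ j, L j • b j, ?_, ?_⟩
  · -- nonzero
    have hj : ∃ j, ¬ ∃ C, ∀ᶠ u in 𝓝[≠] z,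
        ‖(u - z) ^ (a - 1) * ((q j).eval u / d.eval u)‖ ≤ C := by
      by_contra hcon
      push_neg at hcon
      refine ha' (bdd_of_coord_bdd b fun j => ?_)
      obtain ⟨C, hC⟩ := hcon j
      exact ⟨C, hC⟩
    obtain ⟨j0, hj0⟩ := hj
    have hL0 : L j0 ≠ 0 := hLne j0 hj0
    intro hA0
    have hrepr : (b.repr (∑ j, L j • b j)) j0 = L j0 := by
      rw [map_sum]
      rw [Finsupp.finset_sum_apply]
      rw [Finset.sum_eq_single j0]
      · simp [Module.Basis.repr_self]
      · intro j _ hj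
        simp [Module.Basis.repr_self, map_smul, Finsupp.single_apply, hj]
      · intro h; exact absurd (Finset.mem_univ j0) h
    rw [hA0] at hrepr
    simp at hrepr
    exact hL0 hrepr.symm
  · have hfun : ∀ u, (u - z) ^ a • f.eval u =
        ∑ j, ((u - z) ^ a * ((q j).eval u / d.eval u)) • b j := by
      intro u
      conv_lhs => rw [← b.sum_repr ((u - z) ^ a • f.eval u)]
      exact Finset.sum_congr rfl fun j _ => by rw [repr_smul_eval]
    have htend := tendsto_finset_sum (Finset.univ)
      (fun j (_ : j ∈ Finset.univ) => (hL j).smul_const (b j))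
    exact Tendsto.congr (fun u => (hfun u).symm) htend


omit [FiniteDimensional ℂ V]

lemma tendsto_pow_inv_cocompact {k : ℕ} (hk : k ≠ 0) :
    Tendsto (fun u : ℂ => (u ^ k)⁻¹) (cocompact ℂ) (𝓝 0) := by
  rw [tendsto_zero_iff_norm_tendsto_zero]
  have h1 : Tendsto (fun u : ℂ => ‖u‖ ^ k) (cocompact ℂ) atTop :=
    (tendsto_pow_atTop hk).comp tendsto_norm_cocompact_atTop
  have := h1.inv_tendsto_atTop
  refine this.congr fun u => ?_
  simp [norm_inv, norm_pow]

lemma eventually_cocompact_ne_zero : ∀ᶠ u in cocompact ℂ, u ≠ 0 := by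
  have := eventually_cocompact_not_mem (F := {0}) (Set.finite_singleton 0)
  exact this.mono fun u hu => by simpa using hu

lemma polydiv_lim (p : ℂ[X]) (N : ℕ) (hN : p.natDegree ≤ N) :
    Tendsto (fun u : ℂ => p.eval u / u ^ N) (cocompact ℂ) (𝓝 (p.coeff N)) := by
  have hev : ∀ᶠ u in cocompact ℂ, p.eval u / u ^ N =
      ∑ i ∈ Finset.range (N + 1), p.coeff i * (u ^ i / u ^ N) := by
    filter_upwards [eventually_cocompact_ne_zero] with u hu
    rw [Polynomial.eval_eq_sum_range' (Nat.lt_succ_of_le hN), Finset.sum_div]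
    exact Finset.sum_congr rfl fun i _ => by rw [mul_div_assoc]
  have hterm : ∀ i ∈ Finset.range (N + 1),
      Tendsto (fun u : ℂ => p.coeff i * (u ^ i / u ^ N)) (cocompact ℂ)
        (𝓝 (if i = N then p.coeff i else 0)) := by
    intro i hi
    rcases eq_or_ne i N with h | h
    · subst h
      simp only [if_pos rfl]
      have : ∀ᶠ u in cocompact ℂ, p.coeff i * (u ^ i / u ^ i) = p.coeff i := by
        filter_upwards [eventually_cocompact_ne_zero] with u hu
        rw [div_self (pow_ne_zero _ hu), mul_one]
      exact tendsto_const_nhds.congr' (this.mono fun u h => h.symm)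
    · have hiN : i < N := lt_of_le_of_ne (Nat.lt_succ_iff.1 (Finset.mem_range.1 hi)) h
      simp only [if_neg h]
      have heq2 : ∀ᶠ u in cocompact ℂ, p.coeff i * (u ^ (N - i))⁻¹ =
          p.coeff i * (u ^ i / u ^ N) := by
        filter_upwards [eventually_cocompact_ne_zero] with u hu
        congr 1
        rw [eq_div_iff (pow_ne_zero _ hu), inv_mul_eq_div, div_eq_iff (pow_ne_zero _ hu)]
        rw [← pow_add, Nat.add_sub_cancel' hiN.le]
      have := (tendsto_pow_inv_cocompact (k := N - i) (by omega)).const_mul (p.coeff i)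
      rw [mul_zero] at this
      exact this.congr' heq2
  have hsum := tendsto_finset_sum (Finset.range (N + 1)) hterm
  rw [Finset.sum_ite_eq' (Finset.range (N + 1)) N (fun i => p.coeff i)] at hsum
  simp only [Finset.mem_range, Nat.lt_succ_self, if_pos] at hsum
  exact hsum.congr' (hev.mono fun u h => h.symm)

lemma eventually_den_ne {d : ℂ[X]} (hd : d ≠ 0) :
    ∀ᶠ u in cocompact ℂ, d.eval u ≠ 0 := by
  have := eventually_cocompact_not_mem (Polynomial.finite_setOf_isRoot hd)
  exact this.mono fun u hu => fun h => hu h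

lemma deg_lt_of_tendsto_zero {p d : ℂ[X]} (hd : d ≠ 0)
    (h : Tendsto (fun u => p.eval u / d.eval u) (cocompact ℂ) (𝓝 0)) :
    p.degree < d.degree := by
  by_contra hcon
  have hp : p ≠ 0 := by
    intro h0
    apply hcon
    rw [h0, Polynomial.degree_zero]
    exact Ne.bot_lt (fun hb => hd (Polynomial.degree_eq_bot.1 hb))
  have hdeg : d.degree ≤ p.degree := not_lt.1 hcon
  set N := p.natDegree with hN
  have hdN : d.natDegree ≤ N := Polynomial.natDegree_le_natDegree hdeg
  have l1 := polydiv_lim p N le_rfl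
  have l2 := polydiv_lim d N hdN
  have hmul : Tendsto (fun u => (p.eval u / d.eval u) * (d.eval u / u ^ N))
      (cocompact ℂ) (𝓝 (0 * d.coeff N)) := h.mul l2
  rw [zero_mul] at hmul
  have heq : ∀ᶠ u in cocompact ℂ, (p.eval u / d.eval u) * (d.eval u / u ^ N) =
      p.eval u / u ^ N := by
    filter_upwards [eventually_den_ne hd, eventually_cocompact_ne_zero] with u h1 h2
    field_simp
  have := tendsto_nhds_unique (l1.congr' (heq.mono fun u h => h.symm)) hmul
  rw [hN] at this
  exact Polynomial.leadingCoeff_ne_zero.2 hp this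

lemma affine_map_cocompact {a : ℂ} (ha : a ≠ 0) (c : ℂ) :
    Tendsto (fun u : ℂ => a * u + c) (cocompact ℂ) (cocompact ℂ) := by
  intro s hs
  obtain ⟨K, hK, hKs⟩ := mem_cocompact.1 hs
  rw [Filter.mem_map]
  apply mem_cocompact.2
  refine ⟨(fun w : ℂ => a⁻¹ * (w - c)) '' K, hK.image (by continuity), fun u hu => ?_⟩
  apply hKs
  intro hmem
  apply hu
  exact ⟨a * u + c, hmem, by field_simp; ring⟩

lemma exists_deriv_at_infty [FiniteDimensional ℂ V] (f : EndRatData V) (L : V →L[ℂ] V)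
    (hlim : Tendsto f.eval (cocompact ℂ) (𝓝 L)) :
    ∃ H : V →L[ℂ] V, Tendsto (fun u => u • (f.eval u - L)) (cocompact ℂ) (𝓝 H) := by
  classical
  set b : Module.Basis (Fin (Module.finrank ℂ (V →L[ℂ] V))) ℂ (V →L[ℂ] V) :=
    Module.finBasis ℂ (V →L[ℂ] V) with hb
  set d := f.den with hd
  set q : Fin (Module.finrank ℂ (V →L[ℂ] V)) → ℂ[X] :=
    fun j => coordPoly f (b.coord j) with hq
  set c : Fin (Module.finrank ℂ (V →L[ℂ] V)) → ℂ := fun j => b.coord j L with hc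
  set N := d.natDegree with hN
  have hco : ∀ j, ∃ ℓ : ℂ, Tendsto
      (fun u : ℂ => u * ((q j).eval u / d.eval u - c j)) (cocompact ℂ) (𝓝 ℓ) := by
    intro j
    set p : ℂ[X] := q j - Polynomial.C (c j) * d with hp
    -- q j / d tends to c j
    have hcoord : Tendsto (fun u => (q j).eval u / d.eval u) (cocompact ℂ) (𝓝 (c j)) := by
      have hcont : Continuous (LinearMap.toContinuousLinearMap (b.coord j)) :=
        (LinearMap.toContinuousLinearMap (b.coord j)).continuous
      have := (hcont.tendsto L).comp hlim
      refine this.congr fun u => ?_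
      exact (coordPoly_eval f (b.coord j) u)
    have hp0 : Tendsto (fun u => p.eval u / d.eval u) (cocompact ℂ) (𝓝 0) := by
      have heq : ∀ᶠ u in cocompact ℂ, (q j).eval u / d.eval u - c j =
          p.eval u / d.eval u := by
        filter_upwards [eventually_den_ne f.den_ne] with u hu
        rw [hp]; simp only [Polynomial.eval_sub, Polynomial.eval_mul, Polynomial.eval_C]
        field_simp
        rw [sub_div, mul_div_cancel_left₀ _ (show Polynomial.eval u d ≠ 0 from hu)]
      have := hcoord.sub_const (c j)
      rw [sub_self] at this
      exact this.congr' heq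
    have hdeg : p.degree < d.degree := deg_lt_of_tendsto_zero f.den_ne hp0
    have hXp : (Polynomial.X * p).natDegree ≤ N := by
      rcases eq_or_ne p 0 with h0 | h0
      · simp [h0]
      · rw [Polynomial.natDegree_mul Polynomial.X_ne_zero h0, Polynomial.natDegree_X]
        have := Polynomial.natDegree_lt_natDegree h0 hdeg
        omega
    have l1 := polydiv_lim (Polynomial.X * p) N hXp
    have l2 := polydiv_lim d N le_rfl
    have hlc : d.coeff N ≠ 0 := Polynomial.leadingCoeff_ne_zero.2 f.den_ne
    have hdiv := l1.div l2 hlc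
    refine ⟨_, hdiv.congr' ?_⟩
    filter_upwards [eventually_den_ne f.den_ne, eventually_cocompact_ne_zero] with u h1 h2
    show Polynomial.eval u (X * p) / u ^ N / (Polynomial.eval u d / u ^ N) =
      u * (Polynomial.eval u (q j) / Polynomial.eval u d - c j)
    rw [hp]
    simp only [Polynomial.eval_mul, Polynomial.eval_X, Polynomial.eval_sub,
      Polynomial.eval_mul, Polynomial.eval_C]
    have h3 : (u : ℂ) ^ N ≠ 0 := pow_ne_zero _ h2
    field_simp
    ring_nf
    simp [hd, h1]
  choose ℓ hℓ using hco
  refine ⟨∑ j, ℓ j • b j, ?_⟩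
  have hfun : ∀ u : ℂ, u • (f.eval u - L) =
      ∑ j, (u * ((q j).eval u / d.eval u - c j)) • b j := by
    intro u
    conv_lhs => rw [← b.sum_repr (u • (f.eval u - L))]
    refine Finset.sum_congr rfl fun j _ => ?_
    congr 1
    rw [map_smul, Finsupp.smul_apply, smul_eq_mul, map_sub, Finsupp.sub_apply]
    congr 1
    rw [← Module.Basis.coord_apply, coordPoly_eval]
    rfl
  have htend := tendsto_finset_sum (Finset.univ)
    (fun j (_ : j ∈ Finset.univ) => (hℓ j).smul_const (b j))
  exact Tendsto.congr (fun u => (hfun u).symm) htend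


section Sl2

variable {R : Type*} [Ring R] [Algebra ℂ R]

lemma comm_smul_eq {h x y : R} {α β : ℂ}
    (hx : h * x - x * h = α • x) (hy : h * y - y * h = β • y) :
    h * (x * y) - (x * y) * h = (α + β) • (x * y) := by
  have hx' : h * x = x * h + α • x := sub_eq_iff_eq_add'.1 hx
  have hy' : h * y = y * h + β • y := sub_eq_iff_eq_add'.1 hy
  have : h * (x * y) = (x * y) * h + (α + β) • (x * y) := by
    calc h * (x * y) = (h * x) * y := (mul_assoc _ _ _).symm
      _ = (x * h + α • x) * y := by rw [hx']
      _ = x * (h * y) + α • (x * y) := by rw [add_mul, smul_mul_assoc, mul_assoc]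
      _ = x * (y * h + β • y) + α • (x * y) := by rw [hy']
      _ = (x * y) * h + (α + β) • (x * y) := by
          rw [mul_add, mul_smul_comm, ← mul_assoc, add_smul]
          abel
  rw [this]; abel

lemma ad_mul (f x y : R) :
    f * (x * y) - (x * y) * f = (f * x - x * f) * y + x * (f * y - y * f) := by
  noncomm_ring

lemma sl2_vanish [Module.Finite ℂ R] {lam : ℂ} (hlam : lam ≠ 0) {e f h A : R}
    (hef : e * f - f * e = lam • h)
    (hhe : h * e - e * h = (2 * lam) • e)
    (hhA : h * A - A * h = (2 * lam) • A)
    (hfA : f * A - A * f = 0) : A = 0 := by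
  by_contra hA
  set w : ℕ → R := fun k => Nat.rec A (fun _ wk => e * wk - wk * e) k with hw
  have hw0 : w 0 = A := rfl
  have hwsucc : ∀ k, w (k + 1) = e * w k - w k * e := fun k => rfl
  -- H-eigenvector property
  have hhw : ∀ k, h * w k - w k * h = (2 * lam * (k + 1)) • w k := by
    intro k
    induction k with
    | zero => simpa [hw0] using hhA
    | succ k ih =>
      rw [hwsucc k]
      have h1 : h * (e * w k) - (e * w k) * h =
          (2 * lam + 2 * lam * (k + 1)) • (e * w k) := comm_smul_eq hhe ih
      have h2 : h * (w k * e) - (w k * e) * h =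
          (2 * lam * (k + 1) + 2 * lam) • (w k * e) := comm_smul_eq ih hhe
      have : h * (e * w k - w k * e) - (e * w k - w k * e) * h =
          (h * (e * w k) - (e * w k) * h) - (h * (w k * e) - (w k * e) * h) := by
        noncomm_ring
      rw [this, h1, h2]
      have hc : (2 : ℂ) * lam + 2 * lam * (k + 1) = 2 * lam * ((k : ℂ) + 1 + 1) := by ring
      have hc2 : (2 : ℂ) * lam * (k + 1) + 2 * lam = 2 * lam * ((k : ℂ) + 1 + 1) := by ring
      rw [hc, hc2, ← smul_sub]
      push_cast
      ring_nf
  -- F-lowering property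
  have hfe : f * e - e * f = -(lam • h) := by rw [← hef]; noncomm_ring
  have hfw : ∀ k, f * w (k + 1) - w (k + 1) * f =
      (-(lam ^ 2 * (k + 1) * (k + 2))) • w k := by
    intro k
    induction k with
    | zero =>
      rw [hwsucc 0, hw0]
      have hsplit : f * (e * A - A * e) - (e * A - A * e) * f =
          (f * e - e * f) * A + e * (f * A - A * f) -
          ((f * A - A * f) * e + A * (f * e - e * f)) := by noncomm_ring
      rw [hsplit, hfA, hfe]
      have hstep : -(lam • h) * A + e * 0 - (0 * e + A * -(lam • h)) =
          -(lam • (h * A - A * h)) := by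
        rw [smul_sub]
        simp only [neg_smul, neg_mul, mul_neg, smul_mul_assoc, mul_smul_comm,
          mul_zero, zero_mul]
        abel
      rw [hstep, hhA, smul_smul, ← neg_smul]
      congr 1
      push_cast
      ring
    | succ k ih =>
      rw [hwsucc (k + 1)]
      have hsplit : f * (e * w (k+1) - w (k+1) * e) - (e * w (k+1) - w (k+1) * e) * f =
          ((f * e - e * f) * w (k+1) + e * (f * w (k+1) - w (k+1) * f)) -
          ((f * w (k+1) - w (k+1) * f) * e + w (k+1) * (f * e - e * f)) := by
        noncomm_ring
      rw [hsplit, ih, hfe]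
      have hmid : -(lam • h) * w (k+1) + e * ((-(lam ^ 2 * (k + 1) * (k + 2))) • w k) -
          (((-(lam ^ 2 * (k + 1) * (k + 2))) • w k) * e + w (k+1) * -(lam • h)) =
          -(lam • (h * w (k+1) - w (k+1) * h)) +
            (-(lam ^ 2 * (k + 1) * (k + 2))) • (e * w k - w k * e) := by
        rw [smul_sub]
        simp only [neg_smul, neg_mul, mul_neg, smul_mul_assoc, mul_smul_comm, smul_sub]
        abel
      rw [hmid, hhw (k+1), ← hwsucc k]
      push_cast
      module
  -- all w k vanish eventually
  have hex : ∃ k, w k = 0 := by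
    by_contra hall
    push_neg at hall
    set Hop : Module.End ℂ R := LinearMap.mulLeft ℂ h - LinearMap.mulRight ℂ h with hHop
    have heig : ∀ k : ℕ, Hop.HasEigenvector (2 * lam * ((k : ℂ) + 1)) (w k) := by
      intro k
      constructor
      · rw [Module.End.mem_eigenspace_iff]
        have : Hop (w k) = h * w k - w k * h := by
          simp [hHop, LinearMap.mulLeft_apply, LinearMap.mulRight_apply]
        rw [this, hhw k]
      · exact hall k
    have hinj : Function.Injective (fun k : ℕ => 2 * lam * ((k : ℂ) + 1)) := by
      intro a b hab
      simp only at hab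
      have h2 : (2 : ℂ) * lam ≠ 0 := by
        simp [hlam]
      have := mul_left_cancel₀ h2 hab
      exact_mod_cast add_right_cancel this
    have hli := Module.End.eigenvectors_linearIndependent' Hop _ hinj _ heig
    exact Module.Finite.not_linearIndependent_of_infinite w hli
  classical
  have hk0 : Nat.find hex ≠ 0 := by
    intro h0
    have := Nat.find_spec hex
    rw [h0, hw0] at this
    exact hA this
  obtain ⟨m, hm⟩ : ∃ m, Nat.find hex = m + 1 := ⟨Nat.find hex - 1, by omega⟩
  have hwm1 : w (m + 1) = 0 := hm ▸ Nat.find_spec hex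
  have hwm : w m ≠ 0 := Nat.find_min hex (by omega)
  have hzero := hfw m
  rw [hwm1] at hzero
  simp only [mul_zero, zero_mul, sub_zero, zero_sub, neg_zero, sub_self] at hzero
  have hc : (-(lam ^ 2 * ((m : ℂ) + 1) * ((m : ℂ) + 2))) ≠ 0 := by
    have h1 : ((m : ℂ) + 1) ≠ 0 := Nat.cast_add_one_ne_zero m
    have h2 : ((m : ℂ) + 2) ≠ 0 := by
      have he2 : ((m : ℂ) + 2) = ((m + 2 : ℕ) : ℂ) := by push_cast; ring
      rw [he2]
      exact_mod_cast (by omega : (m + 2 : ℕ) ≠ 0)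
    exact neg_ne_zero.2 (mul_ne_zero (mul_ne_zero (pow_ne_zero _ hlam) h1) h2)
  have hwm0 : w m = 0 := (smul_eq_zero.1 hzero.symm).resolve_left hc
  exact hwm hwm0

end Sl2


end YangAux
/-- A finite-dimensional representation of the Yangian `Y_hbar(sl₂)`:  `End(V)`-valued
rational currents `ξ(u)`, `x⁺(u)`, `x⁻(u)` with `ξ(∞) = 1`, `x^±(∞) = 0`,
`X^± = lim u·x^±(u)`, satisfying the relations (𝒴1)–(𝒴4). -/
structure YangianSL2Rep (hbar : ℂ) (V : Type) [NormedAddCommGroup V] [NormedSpace ℂ V] where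
  xi : EndRatData V
  xp : EndRatData V
  xm : EndRatData V
  Xp : V →L[ℂ] V
  Xm : V →L[ℂ] V
  xi_lim : Filter.Tendsto xi.eval (Filter.cocompact ℂ) (nhds 1)
  xp_lim : Filter.Tendsto xp.eval (Filter.cocompact ℂ) (nhds 0)
  xm_lim : Filter.Tendsto xm.eval (Filter.cocompact ℂ) (nhds 0)
  Xp_lim : Filter.Tendsto (fun u => u • xp.eval u) (Filter.cocompact ℂ) (nhds Xp)
  Xm_lim : Filter.Tendsto (fun u => u • xm.eval u) (Filter.cocompact ℂ) (nhds Xm)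
  rel1 : ∀ u v : ℂ, xi.Dom u → xi.Dom v →
    xi.eval u * xi.eval v = xi.eval v * xi.eval u
  rel2p : ∀ u v : ℂ, xi.Dom u → xp.Dom v → xp.Dom (u - hbar) →
    (u - v - hbar) • (xi.eval u * xp.eval v) =
      (u - v + hbar) • (xp.eval v * xi.eval u) - (2 * hbar) • (xp.eval (u - hbar) * xi.eval u)
  rel2m : ∀ u v : ℂ, xi.Dom u → xm.Dom v → xm.Dom (u + hbar) →
    (u - v + hbar) • (xi.eval u * xm.eval v) =
      (u - v - hbar) • (xm.eval v * xi.eval u) + (2 * hbar) • (xm.eval (u + hbar) * xi.eval u)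
  rel3p : ∀ u v : ℂ, xp.Dom u → xp.Dom v →
    (u - v - hbar) • (xp.eval u * xp.eval v) =
      (u - v + hbar) • (xp.eval v * xp.eval u) +
        (Xp * xp.eval v - xp.eval v * Xp) - (xp.eval u * Xp - Xp * xp.eval u)
  rel3m : ∀ u v : ℂ, xm.Dom u → xm.Dom v →
    (u - v + hbar) • (xm.eval u * xm.eval v) =
      (u - v - hbar) • (xm.eval v * xm.eval u) +
        (Xm * xm.eval v - xm.eval v * Xm) - (xm.eval u * Xm - Xm * xm.eval u)
  rel4 : ∀ u v : ℂ, u ≠ v → xp.Dom u → xm.Dom v → xi.Dom u → xi.Dom v →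
    xp.eval u * xm.eval v - xm.eval v * xp.eval u =
      (hbar / (u - v)) • (xi.eval v - xi.eval u)

end

namespace YangAux
open EndRatData

section Yangian

variable {hbar : ℂ} {V : Type} [NormedAddCommGroup V] [NormedSpace ℂ V]
variable (hhbar : hbar ≠ 0) (ρ : YangianSL2Rep hbar V)

lemma dom_cofinite (f : EndRatData V) : {u : ℂ | ¬ f.Dom u}.Finite := by
  have : {u : ℂ | ¬ f.Dom u} = {u | f.den.IsRoot u} := by
    ext u; simp [EndRatData.Dom, Polynomial.IsRoot]
  rw [this]
  exact Polynomial.finite_setOf_isRoot f.den_ne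

lemma dom_shift_cofinite (f : EndRatData V) (c : ℂ) :
    {u : ℂ | ¬ f.Dom (u + c)}.Finite := by
  have h : {u : ℂ | ¬ f.Dom (u + c)} ⊆ (fun r => r - c) '' {u : ℂ | ¬ f.Dom u} := by
    intro u hu
    exact ⟨u + c, hu, by ring⟩
  exact ((dom_cofinite f).image _).subset h

lemma inv_cocompact : Tendsto (fun v : ℂ => v⁻¹) (cocompact ℂ) (𝓝 0) := by
  have := tendsto_pow_inv_cocompact (k := 1) one_ne_zero
  simpa using this

lemma sub_cocompact (u : ℂ) : Tendsto (fun v : ℂ => u - v) (cocompact ℂ) (cocompact ℂ) := by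
  have := affine_map_cocompact (a := (-1 : ℂ)) (by norm_num) u
  refine this.congr fun v => by ring

lemma inv_sub_cocompact (u : ℂ) :
    Tendsto (fun v : ℂ => (u - v)⁻¹) (cocompact ℂ) (𝓝 0) :=
  inv_cocompact.comp (sub_cocompact u)

/-- (II+) : `[x⁺(u), X⁻] = ħ (ξ(u) − 1)`. -/
lemma idYp : ∀ u : ℂ, ρ.xp.Dom u → ρ.xi.Dom u →
    ρ.xp.eval u * ρ.Xm - ρ.Xm * ρ.xp.eval u = hbar • (ρ.xi.eval u - 1) := by
  intro u hu1 hu2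
  set F : ℂ → (V →L[ℂ] V) := fun v =>
    ρ.xp.eval u * (v • ρ.xm.eval v) - (v • ρ.xm.eval v) * ρ.xp.eval u with hF
  have lim1 : Tendsto F (cocompact ℂ) (𝓝 (ρ.xp.eval u * ρ.Xm - ρ.Xm * ρ.xp.eval u)) :=
    (tendsto_const_nhds.mul ρ.Xm_lim).sub (ρ.Xm_lim.mul tendsto_const_nhds)
  have lim2 : Tendsto F (cocompact ℂ) (𝓝 (hbar • (ρ.xi.eval u - 1))) := by
    have hs : Tendsto (fun v : ℂ => v * (hbar / (u - v))) (cocompact ℂ) (𝓝 (-hbar)) := by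
      have hbase : Tendsto (fun v : ℂ => hbar * (-1 + u * (u - v)⁻¹)) (cocompact ℂ)
          (𝓝 (hbar * (-1 + u * 0))) :=
        tendsto_const_nhds.mul (tendsto_const_nhds.add
          (tendsto_const_nhds.mul (inv_sub_cocompact u)))
      have heq : ∀ᶠ v in cocompact ℂ, hbar * (-1 + u * (u - v)⁻¹) =
          v * (hbar / (u - v)) := by
        filter_upwards [eventually_cocompact_not_mem (Set.finite_singleton u)] with v hv
        have hne : u - v ≠ 0 := sub_ne_zero.2 (fun h => hv (by simp [h.symm]))
        field_simp
        ring
      have := hbase.congr' heq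
      simpa using this
    have hvec : Tendsto (fun v => ρ.xi.eval v - ρ.xi.eval u) (cocompact ℂ)
        (𝓝 (1 - ρ.xi.eval u)) := ρ.xi_lim.sub tendsto_const_nhds
    have hprod := hs.smul hvec
    have heq2 : ∀ᶠ v in cocompact ℂ, (v * (hbar / (u - v))) •
        (ρ.xi.eval v - ρ.xi.eval u) = F v := by
      filter_upwards [eventually_cocompact_not_mem (Set.finite_singleton u),
        eventually_cocompact_not_mem (dom_cofinite ρ.xm),
        eventually_cocompact_not_mem (dom_cofinite ρ.xi)] with v hv hdm hdi
      have hne : v ≠ u := fun h => hv (by simp [h])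
      have hrel := ρ.rel4 u v hne.symm hu1 (not_not.1 (fun h => hdm h))
        hu2 (not_not.1 (fun h => hdi h))
      rw [hF]
      simp only [mul_smul_comm, smul_mul_assoc, ← smul_sub]
      rw [hrel, smul_smul]
    have := hprod.congr' heq2
    have hval : (-hbar) • (1 - ρ.xi.eval u) = hbar • (ρ.xi.eval u - 1) := by
      rw [neg_smul, ← smul_neg, neg_sub]
    rwa [hval] at this
  exact tendsto_nhds_unique lim1 lim2

/-- (II−) : `[X⁺, x⁻(v)] = ħ (ξ(v) − 1)`. -/
lemma idYm : ∀ v : ℂ, ρ.xm.Dom v → ρ.xi.Dom v →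
    ρ.Xp * ρ.xm.eval v - ρ.xm.eval v * ρ.Xp = hbar • (ρ.xi.eval v - 1) := by
  intro v hv1 hv2
  set F : ℂ → (V →L[ℂ] V) := fun u =>
    (u • ρ.xp.eval u) * ρ.xm.eval v - ρ.xm.eval v * (u • ρ.xp.eval u) with hF
  have lim1 : Tendsto F (cocompact ℂ) (𝓝 (ρ.Xp * ρ.xm.eval v - ρ.xm.eval v * ρ.Xp)) :=
    (ρ.Xp_lim.mul tendsto_const_nhds).sub (tendsto_const_nhds.mul ρ.Xp_lim)
  have lim2 : Tendsto F (cocompact ℂ) (𝓝 (hbar • (ρ.xi.eval v - 1))) := by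
    have hs : Tendsto (fun u : ℂ => u * (hbar / (u - v))) (cocompact ℂ) (𝓝 hbar) := by
      have hbase : Tendsto (fun u : ℂ => hbar * (1 + v * (u - v)⁻¹)) (cocompact ℂ)
          (𝓝 (hbar * (1 + v * 0))) := by
        refine tendsto_const_nhds.mul (tendsto_const_nhds.add
          (tendsto_const_nhds.mul ?_))
        have : Tendsto (fun u : ℂ => u - v) (cocompact ℂ) (cocompact ℂ) := by
          have := affine_map_cocompact (a := (1 : ℂ)) one_ne_zero (-v)
          refine this.congr fun w => by ring
        exact inv_cocompact.comp this
      have heq : ∀ᶠ u in cocompact ℂ, hbar * (1 + v * (u - v)⁻¹) =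
          u * (hbar / (u - v)) := by
        filter_upwards [eventually_cocompact_not_mem (Set.finite_singleton v)] with u hu
        have hne : u - v ≠ 0 := sub_ne_zero.2 (fun h => hu (by simp [h]))
        field_simp
        ring
      have := hbase.congr' heq
      simpa using this
    have hvec : Tendsto (fun u => ρ.xi.eval v - ρ.xi.eval u) (cocompact ℂ)
        (𝓝 (ρ.xi.eval v - 1)) := tendsto_const_nhds.sub ρ.xi_lim
    have hprod := hs.smul hvec
    have heq2 : ∀ᶠ u in cocompact ℂ, (u * (hbar / (u - v))) •
        (ρ.xi.eval v - ρ.xi.eval u) = F u := by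
      filter_upwards [eventually_cocompact_not_mem (Set.finite_singleton v),
        eventually_cocompact_not_mem (dom_cofinite ρ.xp),
        eventually_cocompact_not_mem (dom_cofinite ρ.xi)] with u hu hdp hdi
      have hne : u ≠ v := fun h => hu (by simp [h])
      have hrel := ρ.rel4 u v hne (not_not.1 (fun h => hdp h)) hv1
        (not_not.1 (fun h => hdi h)) hv2
      rw [hF]
      simp only [mul_smul_comm, smul_mul_assoc, ← smul_sub]
      rw [hrel, smul_smul]
    exact hprod.congr' heq2
  exact tendsto_nhds_unique lim1 lim2

section WithH

variable {H : V →L[ℂ] V}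

/-- `[h, x⁺(v)] = 2ħ x⁺(v)`. -/
lemma idHxp (hH : Tendsto (fun u : ℂ => u • (ρ.xi.eval u - 1)) (cocompact ℂ) (𝓝 H)) : ∀ v : ℂ, ρ.xp.Dom v →
    H * ρ.xp.eval v - ρ.xp.eval v * H = (2 * hbar) • ρ.xp.eval v := by
  intro v hv
  set xv := ρ.xp.eval v with hxv
  set G : ℂ → (V →L[ℂ] V) := fun u =>
    (u - v - hbar) • ((ρ.xi.eval u - 1) * xv) - (u - v + hbar) • (xv * (ρ.xi.eval u - 1))
      + (2 * hbar) • (ρ.xp.eval (u - hbar) * ρ.xi.eval u) with hG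
  have lim1 : Tendsto G (cocompact ℂ) (𝓝 ((2 * hbar) • xv)) := by
    have heq : ∀ᶠ u in cocompact ℂ, (2 * hbar) • xv = G u := by
      filter_upwards [eventually_cocompact_not_mem (dom_cofinite ρ.xi),
        eventually_cocompact_not_mem (dom_shift_cofinite ρ.xp (-hbar))] with u h1 h2
      have hdi : ρ.xi.Dom u := not_not.1 (fun h => h1 h)
      have hdp : ρ.xp.Dom (u - hbar) := by
        have := not_not.1 (fun h => h2 h)
        simpa [sub_eq_add_neg] using this
      have hrel := ρ.rel2p u v hdi hv hdp
      rw [hG]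
      simp only [sub_mul, mul_sub, one_mul, mul_one, smul_sub]
      rw [hrel]
      module
    exact tendsto_const_nhds.congr' heq
  have lim2 : Tendsto G (cocompact ℂ) (𝓝 (H * xv - xv * H + (2 * hbar) • 0)) := by
    have hxp0 : Tendsto (fun u : ℂ => ρ.xp.eval (u - hbar)) (cocompact ℂ) (𝓝 0) := by
      have hshift : Tendsto (fun u : ℂ => u - hbar) (cocompact ℂ) (cocompact ℂ) := by
        have := affine_map_cocompact (a := (1 : ℂ)) one_ne_zero (-hbar)
        refine this.congr fun w => by ring
      exact ρ.xp_lim.comp hshift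
    have hterm3 : Tendsto (fun u : ℂ => (2 * hbar) • (ρ.xp.eval (u - hbar) * ρ.xi.eval u))
        (cocompact ℂ) (𝓝 ((2 * hbar) • 0)) := by
      have := (hxp0.mul ρ.xi_lim)
      rw [← zero_mul (1 : V →L[ℂ] V)] at this ⊢
      exact this.const_smul _
    have hsc1 : Tendsto (fun u : ℂ => (u - v - hbar) / u) (cocompact ℂ) (𝓝 1) := by
      have hbase : Tendsto (fun u : ℂ => 1 - (v + hbar) * u⁻¹) (cocompact ℂ)
          (𝓝 (1 - (v + hbar) * 0)) :=
        tendsto_const_nhds.sub (tendsto_const_nhds.mul inv_cocompact)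
      have heq : ∀ᶠ u in cocompact ℂ, 1 - (v + hbar) * u⁻¹ = (u - v - hbar) / u := by
        filter_upwards [eventually_cocompact_ne_zero] with u hu
        field_simp
        ring
      have := hbase.congr' heq
      simpa using this
    have hsc2 : Tendsto (fun u : ℂ => (u - v + hbar) / u) (cocompact ℂ) (𝓝 1) := by
      have hbase : Tendsto (fun u : ℂ => 1 - (v - hbar) * u⁻¹) (cocompact ℂ)
          (𝓝 (1 - (v - hbar) * 0)) :=
        tendsto_const_nhds.sub (tendsto_const_nhds.mul inv_cocompact)
      have heq : ∀ᶠ u in cocompact ℂ, 1 - (v - hbar) * u⁻¹ = (u - v + hbar) / u := by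
        filter_upwards [eventually_cocompact_ne_zero] with u hu
        field_simp
        ring
      have := hbase.congr' heq
      simpa using this
    have hterm1 : Tendsto (fun u : ℂ => (u - v - hbar) • ((ρ.xi.eval u - 1) * xv))
        (cocompact ℂ) (𝓝 (H * xv)) := by
      have hprod := hsc1.smul ((hH.mul (tendsto_const_nhds (x := xv))))
      rw [one_smul] at hprod
      refine hprod.congr' ?_
      filter_upwards [eventually_cocompact_ne_zero] with u hu
      rw [smul_mul_assoc, smul_smul, div_mul_cancel₀ _ hu]
    have hterm2 : Tendsto (fun u : ℂ => (u - v + hbar) • (xv * (ρ.xi.eval u - 1)))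
        (cocompact ℂ) (𝓝 (xv * H)) := by
      have hprod := hsc2.smul ((tendsto_const_nhds (x := xv)).mul hH)
      rw [one_smul] at hprod
      refine hprod.congr' ?_
      filter_upwards [eventually_cocompact_ne_zero] with u hu
      rw [mul_smul_comm, smul_smul, div_mul_cancel₀ _ hu]
    exact (hterm1.sub hterm2).add hterm3
  have := tendsto_nhds_unique lim1 lim2
  rw [smul_zero, add_zero] at this
  exact this.symm

/-- `[h, x⁻(v)] = −2ħ x⁻(v)`. -/
lemma idHxm (hH : Tendsto (fun u : ℂ => u • (ρ.xi.eval u - 1)) (cocompact ℂ) (𝓝 H)) : ∀ v : ℂ, ρ.xm.Dom v →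
    H * ρ.xm.eval v - ρ.xm.eval v * H = (-(2 * hbar)) • ρ.xm.eval v := by
  intro v hv
  set xv := ρ.xm.eval v with hxv
  set G : ℂ → (V →L[ℂ] V) := fun u =>
    (u - v + hbar) • ((ρ.xi.eval u - 1) * xv) - (u - v - hbar) • (xv * (ρ.xi.eval u - 1))
      - (2 * hbar) • (ρ.xm.eval (u + hbar) * ρ.xi.eval u) with hG
  have lim1 : Tendsto G (cocompact ℂ) (𝓝 ((-(2 * hbar)) • xv)) := by
    have heq : ∀ᶠ u in cocompact ℂ, (-(2 * hbar)) • xv = G u := by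
      filter_upwards [eventually_cocompact_not_mem (dom_cofinite ρ.xi),
        eventually_cocompact_not_mem (dom_shift_cofinite ρ.xm hbar)] with u h1 h2
      have hdi : ρ.xi.Dom u := not_not.1 (fun h => h1 h)
      have hdp : ρ.xm.Dom (u + hbar) := not_not.1 (fun h => h2 h)
      have hrel := ρ.rel2m u v hdi hv hdp
      rw [hG]
      simp only [sub_mul, mul_sub, one_mul, mul_one, smul_sub]
      rw [hrel]
      module
    exact tendsto_const_nhds.congr' heq
  have lim2 : Tendsto G (cocompact ℂ) (𝓝 (H * xv - xv * H - (2 * hbar) • 0)) := by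
    have hxm0 : Tendsto (fun u : ℂ => ρ.xm.eval (u + hbar)) (cocompact ℂ) (𝓝 0) := by
      have hshift : Tendsto (fun u : ℂ => u + hbar) (cocompact ℂ) (cocompact ℂ) := by
        have := affine_map_cocompact (a := (1 : ℂ)) one_ne_zero hbar
        refine this.congr fun w => by ring
      exact ρ.xm_lim.comp hshift
    have hterm3 : Tendsto (fun u : ℂ => (2 * hbar) • (ρ.xm.eval (u + hbar) * ρ.xi.eval u))
        (cocompact ℂ) (𝓝 ((2 * hbar) • 0)) := by
      have := (hxm0.mul ρ.xi_lim)
      rw [← zero_mul (1 : V →L[ℂ] V)] at this ⊢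
      exact this.const_smul _
    have hsc1 : Tendsto (fun u : ℂ => (u - v + hbar) / u) (cocompact ℂ) (𝓝 1) := by
      have hbase : Tendsto (fun u : ℂ => 1 - (v - hbar) * u⁻¹) (cocompact ℂ)
          (𝓝 (1 - (v - hbar) * 0)) :=
        tendsto_const_nhds.sub (tendsto_const_nhds.mul inv_cocompact)
      have heq : ∀ᶠ u in cocompact ℂ, 1 - (v - hbar) * u⁻¹ = (u - v + hbar) / u := by
        filter_upwards [eventually_cocompact_ne_zero] with u hu
        field_simp
        ring
      have := hbase.congr' heq
      simpa using this
    have hsc2 : Tendsto (fun u : ℂ => (u - v - hbar) / u) (cocompact ℂ) (𝓝 1) := by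
      have hbase : Tendsto (fun u : ℂ => 1 - (v + hbar) * u⁻¹) (cocompact ℂ)
          (𝓝 (1 - (v + hbar) * 0)) :=
        tendsto_const_nhds.sub (tendsto_const_nhds.mul inv_cocompact)
      have heq : ∀ᶠ u in cocompact ℂ, 1 - (v + hbar) * u⁻¹ = (u - v - hbar) / u := by
        filter_upwards [eventually_cocompact_ne_zero] with u hu
        field_simp
        ring
      have := hbase.congr' heq
      simpa using this
    have hterm1 : Tendsto (fun u : ℂ => (u - v + hbar) • ((ρ.xi.eval u - 1) * xv))
        (cocompact ℂ) (𝓝 (H * xv)) := by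
      have hprod := hsc1.smul ((hH.mul (tendsto_const_nhds (x := xv))))
      rw [one_smul] at hprod
      refine hprod.congr' ?_
      filter_upwards [eventually_cocompact_ne_zero] with u hu
      rw [smul_mul_assoc, smul_smul, div_mul_cancel₀ _ hu]
    have hterm2 : Tendsto (fun u : ℂ => (u - v - hbar) • (xv * (ρ.xi.eval u - 1)))
        (cocompact ℂ) (𝓝 (xv * H)) := by
      have hprod := hsc2.smul ((tendsto_const_nhds (x := xv)).mul hH)
      rw [one_smul] at hprod
      refine hprod.congr' ?_
      filter_upwards [eventually_cocompact_ne_zero] with u hu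
      rw [mul_smul_comm, smul_smul, div_mul_cancel₀ _ hu]
    exact (hterm1.sub hterm2).sub hterm3
  have := tendsto_nhds_unique lim1 lim2
  rw [smul_zero, sub_zero] at this
  exact this.symm

/-- `[X⁺, X⁻] = ħ h`. -/
lemma idXpXm (hH : Tendsto (fun u : ℂ => u • (ρ.xi.eval u - 1)) (cocompact ℂ) (𝓝 H)) : ρ.Xp * ρ.Xm - ρ.Xm * ρ.Xp = hbar • H := by
  set F : ℂ → (V →L[ℂ] V) := fun u =>
    (u • ρ.xp.eval u) * ρ.Xm - ρ.Xm * (u • ρ.xp.eval u) with hF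
  have lim1 : Tendsto F (cocompact ℂ) (𝓝 (ρ.Xp * ρ.Xm - ρ.Xm * ρ.Xp)) :=
    (ρ.Xp_lim.mul tendsto_const_nhds).sub (tendsto_const_nhds.mul ρ.Xp_lim)
  have lim2 : Tendsto F (cocompact ℂ) (𝓝 (hbar • H)) := by
    have hprod := hH.const_smul hbar
    refine hprod.congr' ?_
    filter_upwards [eventually_cocompact_not_mem (dom_cofinite ρ.xp),
      eventually_cocompact_not_mem (dom_cofinite ρ.xi)] with u h1 h2
    have hid := idYp ρ u (not_not.1 (fun h => h1 h)) (not_not.1 (fun h => h2 h))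
    rw [hF]
    simp only [mul_smul_comm, smul_mul_assoc, ← smul_sub]
    rw [hid, smul_comm]
  exact tendsto_nhds_unique lim1 lim2

/-- `[h, X⁺] = 2ħ X⁺`. -/
lemma idHXp (hH : Tendsto (fun u : ℂ => u • (ρ.xi.eval u - 1)) (cocompact ℂ) (𝓝 H)) : H * ρ.Xp - ρ.Xp * H = (2 * hbar) • ρ.Xp := by
  set F : ℂ → (V →L[ℂ] V) := fun v =>
    H * (v • ρ.xp.eval v) - (v • ρ.xp.eval v) * H with hF
  have lim1 : Tendsto F (cocompact ℂ) (𝓝 (H * ρ.Xp - ρ.Xp * H)) :=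
    (tendsto_const_nhds.mul ρ.Xp_lim).sub (ρ.Xp_lim.mul tendsto_const_nhds)
  have lim2 : Tendsto F (cocompact ℂ) (𝓝 ((2 * hbar) • ρ.Xp)) := by
    have hprod := ρ.Xp_lim.const_smul (2 * hbar)
    refine hprod.congr' ?_
    filter_upwards [eventually_cocompact_not_mem (dom_cofinite ρ.xp)] with v h1
    have hid := idHxp ρ hH v (not_not.1 (fun h => h1 h))
    rw [hF]
    simp only [mul_smul_comm, smul_mul_assoc, ← smul_sub]
    rw [hid, smul_comm]
  exact tendsto_nhds_unique lim1 lim2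

/-- `[h, X⁻] = −2ħ X⁻`. -/
lemma idHXm (hH : Tendsto (fun u : ℂ => u • (ρ.xi.eval u - 1)) (cocompact ℂ) (𝓝 H)) : H * ρ.Xm - ρ.Xm * H = (-(2 * hbar)) • ρ.Xm := by
  set F : ℂ → (V →L[ℂ] V) := fun v =>
    H * (v • ρ.xm.eval v) - (v • ρ.xm.eval v) * H with hF
  have lim1 : Tendsto F (cocompact ℂ) (𝓝 (H * ρ.Xm - ρ.Xm * H)) :=
    (tendsto_const_nhds.mul ρ.Xm_lim).sub (ρ.Xm_lim.mul tendsto_const_nhds)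
  have lim2 : Tendsto F (cocompact ℂ) (𝓝 ((-(2 * hbar)) • ρ.Xm)) := by
    have hprod := ρ.Xm_lim.const_smul (-(2 * hbar))
    refine hprod.congr' ?_
    filter_upwards [eventually_cocompact_not_mem (dom_cofinite ρ.xm)] with v h1
    have hid := idHxm ρ hH v (not_not.1 (fun h => h1 h))
    rw [hF]
    simp only [mul_smul_comm, smul_mul_assoc, ← smul_sub]
    rw [hid, smul_comm]
  exact tendsto_nhds_unique lim1 lim2

end WithH

section Main

variable [FiniteDimensional ℂ V]

lemma pow_sub_tendsto_zero (z : ℂ) {a : ℕ} (ha : a ≠ 0) :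
    Tendsto (fun u : ℂ => (u - z) ^ a) (𝓝[≠] z) (𝓝 0) := by
  have : ContinuousAt (fun u : ℂ => (u - z) ^ a) z :=
    (continuousAt_id.sub continuousAt_const).pow _
  have h2 := this.tendsto.mono_left (nhdsWithin_le_nhds (s := {z}ᶜ))
  simpa [sub_self, zero_pow ha] using h2

lemma Sp_sub_Sxi (hhbar : hbar ≠ 0) (z : ℂ) : Sset ρ.xp z ⊆ Sset ρ.xi z := by
  intro k hk
  rw [Sset, Set.mem_setOf_eq, bddNearOn_iff] at hk ⊢
  obtain ⟨C, hC⟩ := hk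
  refine ⟨‖(1 : V →L[ℂ] V)‖ + ‖hbar‖⁻¹ * (2 * ‖ρ.Xm‖ * max C 0), ?_⟩
  have hball : ∀ᶠ u in 𝓝[≠] z, ‖u - z‖ ≤ 1 := by
    have : ∀ᶠ u in 𝓝 z, u ∈ Metric.ball z 1 := Metric.ball_mem_nhds z one_pos
    exact nhdsWithin_le_nhds (this.mono fun u hu => by
      rw [Metric.mem_ball, dist_eq_norm] at hu; exact hu.le)
  filter_upwards [hC, hball, eventually_not_mem_finite (dom_cofinite ρ.xp) z,
    eventually_not_mem_finite (dom_cofinite ρ.xi) z] with u hCu hb hp hi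
  have hid := idYp ρ u (not_not.1 hp) (not_not.1 hi)
  set P := (u - z) ^ k • ρ.xp.eval u with hP
  have hxi : (u - z) ^ k • ρ.xi.eval u = (u - z) ^ k • (1 : V →L[ℂ] V) +
      hbar⁻¹ • (P * ρ.Xm - ρ.Xm * P) := by
    have h2 : ρ.xi.eval u - 1 =
        hbar⁻¹ • (ρ.xp.eval u * ρ.Xm - ρ.Xm * ρ.xp.eval u) := by
      rw [hid, smul_smul, inv_mul_cancel₀ hhbar, one_smul]
    have h3 : ρ.xi.eval u = 1 + hbar⁻¹ • (ρ.xp.eval u * ρ.Xm - ρ.Xm * ρ.xp.eval u) := by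
      rw [← h2]; abel
    rw [h3, smul_add]
    congr 1
    rw [hP, smul_mul_assoc, mul_smul_comm, ← smul_sub, smul_comm]
  rw [hxi]
  have h1 : ‖(u - z) ^ k • (1 : V →L[ℂ] V)‖ ≤ ‖(1 : V →L[ℂ] V)‖ := by
    rw [norm_smul ((u - z) ^ k) (1 : V →L[ℂ] V)]
    apply mul_le_of_le_one_left (norm_nonneg _)
    rw [norm_pow]; exact pow_le_one₀ (norm_nonneg _) hb
  have hPC : ‖P‖ ≤ max C 0 := hCu.trans (le_max_left _ _)
  have h2 : ‖hbar⁻¹ • (P * ρ.Xm - ρ.Xm * P)‖ ≤ ‖hbar‖⁻¹ * (2 * ‖ρ.Xm‖ * max C 0) := by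
    rw [norm_smul hbar⁻¹ (P * ρ.Xm - ρ.Xm * P), norm_inv]
    apply mul_le_mul_of_nonneg_left ?_ (by positivity)
    calc ‖P * ρ.Xm - ρ.Xm * P‖ ≤ ‖P * ρ.Xm‖ + ‖ρ.Xm * P‖ := norm_sub_le _ _
      _ ≤ ‖P‖ * ‖ρ.Xm‖ + ‖ρ.Xm‖ * ‖P‖ := add_le_add (norm_mul_le _ _) (norm_mul_le _ _)
      _ ≤ max C 0 * ‖ρ.Xm‖ + ‖ρ.Xm‖ * max C 0 :=
          add_le_add (mul_le_mul_of_nonneg_right hPC (norm_nonneg _))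
            (mul_le_mul_of_nonneg_left hPC (norm_nonneg _))
      _ = 2 * ‖ρ.Xm‖ * max C 0 := by ring
  exact (norm_add_le _ _).trans (add_le_add h1 h2)

lemma Sm_sub_Sxi (hhbar : hbar ≠ 0) (z : ℂ) : Sset ρ.xm z ⊆ Sset ρ.xi z := by
  intro k hk
  rw [Sset, Set.mem_setOf_eq, bddNearOn_iff] at hk ⊢
  obtain ⟨C, hC⟩ := hk
  refine ⟨‖(1 : V →L[ℂ] V)‖ + ‖hbar‖⁻¹ * (2 * ‖ρ.Xp‖ * max C 0), ?_⟩
  have hball : ∀ᶠ u in 𝓝[≠] z, ‖u - z‖ ≤ 1 := by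
    have : ∀ᶠ u in 𝓝 z, u ∈ Metric.ball z 1 := Metric.ball_mem_nhds z one_pos
    exact nhdsWithin_le_nhds (this.mono fun u hu => by
      rw [Metric.mem_ball, dist_eq_norm] at hu; exact hu.le)
  filter_upwards [hC, hball, eventually_not_mem_finite (dom_cofinite ρ.xm) z,
    eventually_not_mem_finite (dom_cofinite ρ.xi) z] with u hCu hb hp hi
  have hid := idYm ρ u (not_not.1 hp) (not_not.1 hi)
  set P := (u - z) ^ k • ρ.xm.eval u with hP
  have hxi : (u - z) ^ k • ρ.xi.eval u = (u - z) ^ k • (1 : V →L[ℂ] V) +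
      hbar⁻¹ • (ρ.Xp * P - P * ρ.Xp) := by
    have h2 : ρ.xi.eval u - 1 =
        hbar⁻¹ • (ρ.Xp * ρ.xm.eval u - ρ.xm.eval u * ρ.Xp) := by
      rw [hid, smul_smul, inv_mul_cancel₀ hhbar, one_smul]
    have h3 : ρ.xi.eval u = 1 + hbar⁻¹ • (ρ.Xp * ρ.xm.eval u - ρ.xm.eval u * ρ.Xp) := by
      rw [← h2]; abel
    rw [h3, smul_add]
    congr 1
    rw [hP, smul_mul_assoc, mul_smul_comm, ← smul_sub, smul_comm]
  rw [hxi]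
  have h1 : ‖(u - z) ^ k • (1 : V →L[ℂ] V)‖ ≤ ‖(1 : V →L[ℂ] V)‖ := by
    rw [norm_smul ((u - z) ^ k) (1 : V →L[ℂ] V)]
    apply mul_le_of_le_one_left (norm_nonneg _)
    rw [norm_pow]; exact pow_le_one₀ (norm_nonneg _) hb
  have hPC : ‖P‖ ≤ max C 0 := hCu.trans (le_max_left _ _)
  have h2 : ‖hbar⁻¹ • (ρ.Xp * P - P * ρ.Xp)‖ ≤ ‖hbar‖⁻¹ * (2 * ‖ρ.Xp‖ * max C 0) := by
    rw [norm_smul hbar⁻¹ (ρ.Xp * P - P * ρ.Xp), norm_inv]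
    apply mul_le_mul_of_nonneg_left ?_ (by positivity)
    calc ‖ρ.Xp * P - P * ρ.Xp‖ ≤ ‖ρ.Xp * P‖ + ‖P * ρ.Xp‖ := norm_sub_le _ _
      _ ≤ ‖ρ.Xp‖ * ‖P‖ + ‖P‖ * ‖ρ.Xp‖ := add_le_add (norm_mul_le _ _) (norm_mul_le _ _)
      _ ≤ ‖ρ.Xp‖ * max C 0 + max C 0 * ‖ρ.Xp‖ :=
          add_le_add (mul_le_mul_of_nonneg_left hPC (norm_nonneg _))
            (mul_le_mul_of_nonneg_right hPC (norm_nonneg _))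
      _ = 2 * ‖ρ.Xp‖ * max C 0 := by ring
  exact (norm_add_le _ _).trans (add_le_add h1 h2)

variable {H : V →L[ℂ] V}

lemma xp_order_le (hhbar : hbar ≠ 0) (hH : Tendsto (fun u : ℂ => u • (ρ.xi.eval u - 1)) (cocompact ℂ) (𝓝 H))
    (z : ℂ) : ρ.xp.order z ≤ ρ.xi.order z := by
  by_contra hcon
  push_neg at hcon
  set a := ρ.xp.order z with hadef
  have ha1 : 1 ≤ a := by omega
  have haS : a ∈ Sset ρ.xp z := Nat.sInf_mem ⟨_, Sset_nonempty _ z⟩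
  have ha' : a - 1 ∉ Sset ρ.xp z := fun hmem => by
    have := Nat.sInf_le hmem
    rw [← order_def] at this
    omega
  obtain ⟨A, hA0, hA⟩ := exists_leadCoeff ρ.xp z a ha1 haS ha'
  have hm : ρ.xi.order z ∈ Sset ρ.xi z := Nat.sInf_mem ⟨_, Sset_nonempty _ z⟩
  have hxi0 : Tendsto (fun u => (u - z) ^ a • ρ.xi.eval u) (𝓝[≠] z) (𝓝 0) :=
    Sset_tendsto_zero hm hcon
  have hpow0 : Tendsto (fun u : ℂ => (u - z) ^ a) (𝓝[≠] z) (𝓝 0) :=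
    pow_sub_tendsto_zero z (by omega)
  have hR1 : ρ.Xm * A - A * ρ.Xm = 0 := by
    have lim1 : Tendsto (fun u => ((u - z) ^ a • ρ.xp.eval u) * ρ.Xm -
        ρ.Xm * ((u - z) ^ a • ρ.xp.eval u)) (𝓝[≠] z) (𝓝 (A * ρ.Xm - ρ.Xm * A)) :=
      (hA.mul tendsto_const_nhds).sub (tendsto_const_nhds.mul hA)
    have lim2 : Tendsto (fun u => ((u - z) ^ a • ρ.xp.eval u) * ρ.Xm -
        ρ.Xm * ((u - z) ^ a • ρ.xp.eval u)) (𝓝[≠] z) (𝓝 0) := by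
      have hx1 := (hxi0.sub (hpow0.smul_const (1 : V →L[ℂ] V))).const_smul hbar
      simp only [zero_smul, sub_zero, smul_zero] at hx1
      refine hx1.congr' ?_
      filter_upwards [eventually_not_mem_finite (dom_cofinite ρ.xp) z,
        eventually_not_mem_finite (dom_cofinite ρ.xi) z] with u hp hi
      have hid := idYp ρ u (not_not.1 hp) (not_not.1 hi)
      calc hbar • ((u - z) ^ a • ρ.xi.eval u - (u - z) ^ a • (1 : V →L[ℂ] V))
          = hbar • ((u - z) ^ a • (ρ.xi.eval u - 1)) := by
            rw [smul_sub ((u - z) ^ a) (ρ.xi.eval u) (1 : V →L[ℂ] V)]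
        _ = (u - z) ^ a • (hbar • (ρ.xi.eval u - 1)) := smul_comm _ _ _
        _ = (u - z) ^ a • (ρ.xp.eval u * ρ.Xm - ρ.Xm * ρ.xp.eval u) := by rw [hid]
        _ = ((u - z) ^ a • ρ.xp.eval u) * ρ.Xm - ρ.Xm * ((u - z) ^ a • ρ.xp.eval u) := by
            rw [smul_sub, smul_mul_assoc, mul_smul_comm]
    have h0 := tendsto_nhds_unique lim1 lim2
    rw [sub_eq_zero] at h0
    rw [sub_eq_zero, h0]
  have hR2 : H * A - A * H = (2 * hbar) • A := by
    have lim1 : Tendsto (fun v => H * ((v - z) ^ a • ρ.xp.eval v) -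
        ((v - z) ^ a • ρ.xp.eval v) * H) (𝓝[≠] z) (𝓝 (H * A - A * H)) :=
      (tendsto_const_nhds.mul hA).sub (hA.mul tendsto_const_nhds)
    have lim2 : Tendsto (fun v => H * ((v - z) ^ a • ρ.xp.eval v) -
        ((v - z) ^ a • ρ.xp.eval v) * H) (𝓝[≠] z) (𝓝 ((2 * hbar) • A)) := by
      refine (hA.const_smul (2 * hbar)).congr' ?_
      filter_upwards [eventually_not_mem_finite (dom_cofinite ρ.xp) z] with v hp
      have hid := idHxp ρ hH v (not_not.1 hp)
      calc (2 * hbar) • ((v - z) ^ a • ρ.xp.eval v)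
          = (v - z) ^ a • ((2 * hbar) • ρ.xp.eval v) := smul_comm _ _ _
        _ = (v - z) ^ a • (H * ρ.xp.eval v - ρ.xp.eval v * H) := by rw [hid]
        _ = H * ((v - z) ^ a • ρ.xp.eval v) - ((v - z) ^ a • ρ.xp.eval v) * H := by
            rw [smul_sub, mul_smul_comm, smul_mul_assoc]
    exact tendsto_nhds_unique lim1 lim2
  exact hA0 (sl2_vanish hhbar (idXpXm ρ hH) (idHXp ρ hH) hR2 hR1)

lemma xm_order_le (hhbar : hbar ≠ 0) (hH : Tendsto (fun u : ℂ => u • (ρ.xi.eval u - 1)) (cocompact ℂ) (𝓝 H))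
    (z : ℂ) : ρ.xm.order z ≤ ρ.xi.order z := by
  by_contra hcon
  push_neg at hcon
  set a := ρ.xm.order z with hadef
  have ha1 : 1 ≤ a := by omega
  have haS : a ∈ Sset ρ.xm z := Nat.sInf_mem ⟨_, Sset_nonempty _ z⟩
  have ha' : a - 1 ∉ Sset ρ.xm z := fun hmem => by
    have := Nat.sInf_le hmem
    rw [← order_def] at this
    omega
  obtain ⟨B, hB0, hB⟩ := exists_leadCoeff ρ.xm z a ha1 haS ha'
  have hm : ρ.xi.order z ∈ Sset ρ.xi z := Nat.sInf_mem ⟨_, Sset_nonempty _ z⟩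
  have hxi0 : Tendsto (fun u => (u - z) ^ a • ρ.xi.eval u) (𝓝[≠] z) (𝓝 0) :=
    Sset_tendsto_zero hm hcon
  have hpow0 : Tendsto (fun u : ℂ => (u - z) ^ a) (𝓝[≠] z) (𝓝 0) :=
    pow_sub_tendsto_zero z (by omega)
  have hR1 : ρ.Xp * B - B * ρ.Xp = 0 := by
    have lim1 : Tendsto (fun u => ρ.Xp * ((u - z) ^ a • ρ.xm.eval u) -
        ((u - z) ^ a • ρ.xm.eval u) * ρ.Xp) (𝓝[≠] z) (𝓝 (ρ.Xp * B - B * ρ.Xp)) :=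
      (tendsto_const_nhds.mul hB).sub (hB.mul tendsto_const_nhds)
    have lim2 : Tendsto (fun u => ρ.Xp * ((u - z) ^ a • ρ.xm.eval u) -
        ((u - z) ^ a • ρ.xm.eval u) * ρ.Xp) (𝓝[≠] z) (𝓝 0) := by
      have hx1 := (hxi0.sub (hpow0.smul_const (1 : V →L[ℂ] V))).const_smul hbar
      simp only [zero_smul, sub_zero, smul_zero] at hx1
      refine hx1.congr' ?_
      filter_upwards [eventually_not_mem_finite (dom_cofinite ρ.xm) z,
        eventually_not_mem_finite (dom_cofinite ρ.xi) z] with u hp hi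
      have hid := idYm ρ u (not_not.1 hp) (not_not.1 hi)
      calc hbar • ((u - z) ^ a • ρ.xi.eval u - (u - z) ^ a • (1 : V →L[ℂ] V))
          = hbar • ((u - z) ^ a • (ρ.xi.eval u - 1)) := by
            rw [smul_sub ((u - z) ^ a) (ρ.xi.eval u) (1 : V →L[ℂ] V)]
        _ = (u - z) ^ a • (hbar • (ρ.xi.eval u - 1)) := smul_comm _ _ _
        _ = (u - z) ^ a • (ρ.Xp * ρ.xm.eval u - ρ.xm.eval u * ρ.Xp) := by rw [hid]
        _ = ρ.Xp * ((u - z) ^ a • ρ.xm.eval u) - ((u - z) ^ a • ρ.xm.eval u) * ρ.Xp := by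
            rw [smul_sub, smul_mul_assoc, mul_smul_comm]
    exact tendsto_nhds_unique lim1 lim2
  have hR2 : H * B - B * H = (-(2 * hbar)) • B := by
    have lim1 : Tendsto (fun v => H * ((v - z) ^ a • ρ.xm.eval v) -
        ((v - z) ^ a • ρ.xm.eval v) * H) (𝓝[≠] z) (𝓝 (H * B - B * H)) :=
      (tendsto_const_nhds.mul hB).sub (hB.mul tendsto_const_nhds)
    have lim2 : Tendsto (fun v => H * ((v - z) ^ a • ρ.xm.eval v) -
        ((v - z) ^ a • ρ.xm.eval v) * H) (𝓝[≠] z) (𝓝 ((-(2 * hbar)) • B)) := by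
      refine (hB.const_smul (-(2 * hbar))).congr' ?_
      filter_upwards [eventually_not_mem_finite (dom_cofinite ρ.xm) z] with v hp
      have hid := idHxm ρ hH v (not_not.1 hp)
      calc (-(2 * hbar)) • ((v - z) ^ a • ρ.xm.eval v)
          = (v - z) ^ a • ((-(2 * hbar)) • ρ.xm.eval v) := smul_comm _ _ _
        _ = (v - z) ^ a • (H * ρ.xm.eval v - ρ.xm.eval v * H) := by rw [hid]
        _ = H * ((v - z) ^ a • ρ.xm.eval v) - ((v - z) ^ a • ρ.xm.eval v) * H := by
            rw [smul_sub, mul_smul_comm, smul_mul_assoc]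
    exact tendsto_nhds_unique lim1 lim2
  -- mirrored sl2 data
  have hef' : ρ.Xm * ρ.Xp - ρ.Xp * ρ.Xm = hbar • (-H) := by
    calc ρ.Xm * ρ.Xp - ρ.Xp * ρ.Xm = -(ρ.Xp * ρ.Xm - ρ.Xm * ρ.Xp) := by noncomm_ring
      _ = -(hbar • H) := by rw [idXpXm ρ hH]
      _ = hbar • (-H) := by rw [smul_neg]
  have hhe' : (-H) * ρ.Xm - ρ.Xm * (-H) = (2 * hbar) • ρ.Xm := by
    calc (-H) * ρ.Xm - ρ.Xm * (-H) = -(H * ρ.Xm - ρ.Xm * H) := by noncomm_ring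
      _ = -((-(2 * hbar)) • ρ.Xm) := by rw [idHXm ρ hH]
      _ = (2 * hbar) • ρ.Xm := by rw [neg_smul, neg_neg]
  have hhB' : (-H) * B - B * (-H) = (2 * hbar) • B := by
    calc (-H) * B - B * (-H) = -(H * B - B * H) := by noncomm_ring
      _ = -((-(2 * hbar)) • B) := by rw [hR2]
      _ = (2 * hbar) • B := by rw [neg_smul, neg_neg]
  exact hB0 (sl2_vanish hhbar hef' hhe' hhB' hR1)

lemma isPole_iff_order_ne (f : EndRatData V) (z : ℂ) :
    f.IsPole z ↔ f.order z ≠ 0 := by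
  have hfun : (fun u => (u - z) ^ 0 • f.eval u) = f.eval := by
    funext u; rw [pow_zero, one_smul]
  have h0 : (0 : ℕ) ∈ Sset f z ↔ BddNearOn f.eval z := by
    rw [Sset, Set.mem_setOf_eq, hfun]
  constructor
  · intro hp h0ord
    have hmem : f.order z ∈ Sset f z := Nat.sInf_mem ⟨_, Sset_nonempty f z⟩
    rw [h0ord] at hmem
    exact hp (h0.1 hmem)
  · intro hne hbdd
    exact hne (Nat.le_zero.1 (Nat.sInf_le (h0.2 hbdd)))

end Main
end Yangian


end YangAux

/-- For a finite-dimensional representation of `Y_ħ(sl₂)`, the sets of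
poles of `ξ`, `x⁺`, `x⁻` coincide, and at every `z ∈ ℂ` the orders of the poles agree. -/

theorem yangianSL2_poles_eq_and_order_eq
    (hbar : ℂ) (hhbar : hbar ≠ 0) (V : Type)
    [NormedAddCommGroup V] [NormedSpace ℂ V] [FiniteDimensional ℂ V]
    (ρ : YangianSL2Rep hbar V) :
    ρ.xi.poles = ρ.xp.poles ∧ ρ.xi.poles = ρ.xm.poles ∧
      ∀ z : ℂ, ρ.xi.order z = ρ.xp.order z ∧ ρ.xi.order z = ρ.xm.order z := by
  obtain ⟨H, hH⟩ := YangAux.exists_deriv_at_infty ρ.xi 1 ρ.xi_lim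
  have key : ∀ z : ℂ, ρ.xi.order z = ρ.xp.order z ∧ ρ.xi.order z = ρ.xm.order z := by
    intro z
    constructor
    · have h1 : ρ.xi.order z ≤ ρ.xp.order z := by
        rw [YangAux.order_def, YangAux.order_def]
        exact Nat.sInf_le (YangAux.Sp_sub_Sxi ρ hhbar z
          (Nat.sInf_mem ⟨_, YangAux.Sset_nonempty ρ.xp z⟩))
      exact le_antisymm h1 (YangAux.xp_order_le ρ hhbar hH z)
    · have h1 : ρ.xi.order z ≤ ρ.xm.order z := by
        rw [YangAux.order_def, YangAux.order_def]
        exact Nat.sInf_le (YangAux.Sm_sub_Sxi ρ hhbar z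
          (Nat.sInf_mem ⟨_, YangAux.Sset_nonempty ρ.xm z⟩))
      exact le_antisymm h1 (YangAux.xm_order_le ρ hhbar hH z)
  refine ⟨?_, ?_, key⟩
  · ext z
    simp only [EndRatData.poles, Set.mem_setOf_eq, YangAux.isPole_iff_order_ne, (key z).1]
  · ext z
    simp only [EndRatData.poles, Set.mem_setOf_eq, YangAux.isPole_iff_order_ne, (key z).2]
end

section
/- Let (V, ξ, x⁺, x⁻) be a finite-dimensional representation of the Yangian Y_ħ(sl₂), and write (ad X)(A) := XA − AX for X, A ∈ End(V). Then, as identities of End(V)-valued rational functions (i.e. for all u outside a finite set), one has (ad X⁺)(ξ(u)) = −2ħ·ξ(u)x⁺(u+ħ) and (ad X⁺)(x⁺(u)) = −ħ·x⁺(u)², and more generally for every integer k ≥ 0: ξ(u)·x⁺(u+ħ)^k = ((−1)^k/((k+1)!·ħ^k))·(ad X⁺)^k(ξ(u)) and x⁻(u+ħ)^k·ξ(u) = (1/((k+1)!·ħ^k))·(ad X⁻)^k(ξ(u)). -/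
open Filter Topology Polynomial

noncomputable section AuxLemmas

variable {V : Type} [NormedAddCommGroup V] [NormedSpace ℂ V]

lemma aux_ad_mul (X A B pA pB : V →L[ℂ] V) (a b : ℂ)
    (hA : X * A - A * X = a • pA) (hB : X * B - B * X = b • pB) :
    X * (A * B) - (A * B) * X = a • (pA * B) + b • (A * pB) := by
  have h : X * (A * B) - (A * B) * X = (X * A - A * X) * B + A * (X * B - B * X) := by
    noncomm_ring
  rw [h, hA, hB, smul_mul_assoc, mul_smul_comm]

lemma aux_ad_pow (X p : V →L[ℂ] V) (c : ℂ) (h : X * p - p * X = c • (p * p)) :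
    ∀ k : ℕ, X * p ^ k - p ^ k * X = ((k : ℂ) * c) • p ^ (k + 1) := by
  intro k
  induction k with
  | zero => simp
  | succ n ih =>
    have e := aux_ad_mul X (p ^ n) p (p ^ (n + 1)) (p * p) ((n : ℂ) * c) c ih h
    rw [← pow_succ] at e
    have e2 : p ^ (n + 1) * p = p ^ (n + 2) := by rw [← pow_succ]
    have e3 : p ^ n * (p * p) = p ^ (n + 2) := by rw [← mul_assoc, ← pow_succ, ← pow_succ]
    rw [e2, e3, ← add_smul] at e
    rw [e]; congr 1; push_cast; ring

lemma aux_ad_smul (X A : V →L[ℂ] V) (c : ℂ) :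
    X * (c • A) - (c • A) * X = c • (X * A - A * X) := by
  rw [mul_smul_comm, smul_mul_assoc, smul_sub]

/-- Iterated ad on `ξ`, plus case. -/
lemma aux_iter_p (hbar : ℂ) (X ξ p : V →L[ℂ] V)
    (hξ : X * ξ - ξ * X = (-(2 * hbar)) • (ξ * p))
    (hp : X * p - p * X = (-hbar) • (p * p)) :
    ∀ k : ℕ, (fun A : V →L[ℂ] V => X * A - A * X)^[k] ξ =
      ((-1) ^ k * (Nat.factorial (k + 1) : ℂ) * hbar ^ k) • (ξ * p ^ k) := by
  intro k
  induction k with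
  | zero => simp
  | succ n ih =>
    rw [Function.iterate_succ_apply', ih]
    have key : X * (ξ * p ^ n) - (ξ * p ^ n) * X
        = (-((n : ℂ) + 2) * hbar) • (ξ * p ^ (n + 1)) := by
      have e := aux_ad_mul X ξ (p ^ n) (ξ * p) (p ^ (n + 1)) (-(2 * hbar)) ((n : ℂ) * -hbar)
        hξ (aux_ad_pow X p (-hbar) hp n)
      have e2 : (ξ * p) * p ^ n = ξ * p ^ (n + 1) := by rw [mul_assoc, ← pow_succ']
      rw [e2, ← add_smul] at e
      rw [e]; congr 1; ring
    rw [aux_ad_smul, key, smul_smul]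
    congr 1
    push_cast [Nat.factorial_succ]
    ring

/-- Iterated ad on `ξ`, minus case. -/
lemma aux_iter_m (hbar : ℂ) (X ξ p : V →L[ℂ] V)
    (hξ : X * ξ - ξ * X = (2 * hbar) • (p * ξ))
    (hp : X * p - p * X = hbar • (p * p)) :
    ∀ k : ℕ, (fun A : V →L[ℂ] V => X * A - A * X)^[k] ξ =
      ((Nat.factorial (k + 1) : ℂ) * hbar ^ k) • (p ^ k * ξ) := by
  intro k
  induction k with
  | zero => simp
  | succ n ih =>
    rw [Function.iterate_succ_apply', ih]
    have key : X * (p ^ n * ξ) - (p ^ n * ξ) * X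
        = (((n : ℂ) + 2) * hbar) • (p ^ (n + 1) * ξ) := by
      have e := aux_ad_mul X (p ^ n) ξ (p ^ (n + 1)) (p * ξ) ((n : ℂ) * hbar) (2 * hbar)
        (aux_ad_pow X p hbar hp n) hξ
      have e2 : p ^ n * (p * ξ) = p ^ (n + 1) * ξ := by rw [← mul_assoc, ← pow_succ]
      rw [e2, ← add_smul] at e
      rw [e]; congr 1; ring
    rw [aux_ad_smul, key, smul_smul]
    congr 1
    push_cast [Nat.factorial_succ]
    ring

lemma aux_continuousAt_eval (f : EndRatData V) {u : ℂ} (h : f.Dom u) :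
    ContinuousAt f.eval u := by
  have h1 : ContinuousAt (fun u : ℂ => (f.den.eval u)⁻¹) u :=
    (f.den.continuousAt).inv₀ h
  have h2 : ContinuousAt (fun u : ℂ => f.num.eval (u • (1 : V →L[ℂ] V))) u :=
    (f.num.continuous.comp (continuous_id.smul continuous_const)).continuousAt
  exact h1.smul h2

lemma aux_bad_finite (f : EndRatData V) : {u : ℂ | ¬ f.Dom u}.Finite := by
  have := f.den.finite_setOf_isRoot f.den_ne
  simpa [EndRatData.Dom, Polynomial.IsRoot] using this

lemma aux_dom_cocompact (f : EndRatData V) : {u : ℂ | f.Dom u} ∈ cocompact ℂ := by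
  rw [mem_cocompact]
  exact ⟨_, (aux_bad_finite f).isCompact, fun u hu => not_not.mp hu⟩

lemma aux_nebot (s : Set ℂ) (h : s.Finite) (u : ℂ) : (𝓝[sᶜ \ {u}] u).NeBot := by
  apply mem_closure_iff_nhdsWithin_neBot.mp
  have hd : Dense (sᶜ \ {u} : Set ℂ) := by
    have := ((h.union (Set.finite_singleton u)).countable).dense_compl ℂ
    rwa [Set.compl_union, ← Set.diff_eq] at this
  exact hd.closure_eq ▸ Set.mem_univ u

/-- The v → ∞ limit of relation (Y2+). -/
lemma aux_adXp_xi (hbar : ℂ) (ρ : YangianSL2Rep hbar V) {u : ℂ}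
    (h1 : ρ.xi.Dom u) (h2 : ρ.xp.Dom (u - hbar)) :
    ρ.Xp * ρ.xi.eval u - ρ.xi.eval u * ρ.Xp
      = (-(2 * hbar)) • (ρ.xp.eval (u - hbar) * ρ.xi.eval u) := by
  set ξ := ρ.xi.eval u with hxi
  set P := ρ.xp.eval (u - hbar) with hP
  set F : ℂ → (V →L[ℂ] V) := fun v =>
    ((u - hbar) • (ξ * ρ.xp.eval v) - ξ * (v • ρ.xp.eval v))
      - (((u + hbar) • (ρ.xp.eval v * ξ) - (v • ρ.xp.eval v) * ξ)
          - (2 * hbar) • (P * ξ)) with hF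
  have hev : ∀ᶠ v in cocompact ℂ, F v = 0 := by
    filter_upwards [aux_dom_cocompact ρ.xp] with v hv
    have hrel := ρ.rel2p u v h1 hv h2
    have e1 : (u - hbar) • (ξ * ρ.xp.eval v) - ξ * (v • ρ.xp.eval v)
        = (u - v - hbar) • (ξ * ρ.xp.eval v) := by
      rw [mul_smul_comm, ← sub_smul]; congr 1; ring
    have e2 : (u + hbar) • (ρ.xp.eval v * ξ) - (v • ρ.xp.eval v) * ξ
        = (u - v + hbar) • (ρ.xp.eval v * ξ) := by
      rw [smul_mul_assoc, ← sub_smul]; congr 1; ring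
    rw [hF]
    simp only [e1, e2]
    rw [hrel, sub_self]
  have hlim : Tendsto F (cocompact ℂ)
      (𝓝 (((u - hbar) • (ξ * (0 : V →L[ℂ] V)) - ξ * ρ.Xp)
        - (((u + hbar) • ((0 : V →L[ℂ] V) * ξ) - ρ.Xp * ξ) - (2 * hbar) • (P * ξ)))) := by
    apply Tendsto.sub
    · exact ((tendsto_const_nhds.mul ρ.xp_lim).const_smul _).sub
        (tendsto_const_nhds.mul ρ.Xp_lim)
    · exact (((ρ.xp_lim.mul tendsto_const_nhds).const_smul _).sub
        (ρ.Xp_lim.mul tendsto_const_nhds)).sub tendsto_const_nhds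
  have h0 : Tendsto F (cocompact ℂ) (𝓝 0) :=
    Tendsto.congr' (Filter.EventuallyEq.symm hev) tendsto_const_nhds
  have hkey := tendsto_nhds_unique hlim h0
  simp only [mul_zero, zero_mul, smul_zero, zero_sub] at hkey
  -- hkey : -(ξ * ρ.Xp) - (-(ρ.Xp * ξ) - (2 * hbar) • (P * ξ)) = 0
  have h3 : -(ξ * ρ.Xp) = -(ρ.Xp * ξ) - (2 * hbar) • (P * ξ) := sub_eq_zero.mp hkey
  have h4 : ρ.Xp * ξ - ξ * ρ.Xp = ρ.Xp * ξ + (-(ρ.Xp * ξ) - (2 * hbar) • (P * ξ)) := by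
    rw [← h3]; abel
  rw [h4, neg_smul]
  abel

/-- The v → ∞ limit of relation (Y2-). -/
lemma aux_adXm_xi (hbar : ℂ) (ρ : YangianSL2Rep hbar V) {u : ℂ}
    (h1 : ρ.xi.Dom u) (h2 : ρ.xm.Dom (u + hbar)) :
    ρ.Xm * ρ.xi.eval u - ρ.xi.eval u * ρ.Xm
      = (2 * hbar) • (ρ.xm.eval (u + hbar) * ρ.xi.eval u) := by
  set ξ := ρ.xi.eval u with hxi
  set P := ρ.xm.eval (u + hbar) with hP
  set F : ℂ → (V →L[ℂ] V) := fun v =>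
    ((u + hbar) • (ξ * ρ.xm.eval v) - ξ * (v • ρ.xm.eval v))
      - (((u - hbar) • (ρ.xm.eval v * ξ) - (v • ρ.xm.eval v) * ξ)
          + (2 * hbar) • (P * ξ)) with hF
  have hev : ∀ᶠ v in cocompact ℂ, F v = 0 := by
    filter_upwards [aux_dom_cocompact ρ.xm] with v hv
    have hrel := ρ.rel2m u v h1 hv h2
    have e1 : (u + hbar) • (ξ * ρ.xm.eval v) - ξ * (v • ρ.xm.eval v)
        = (u - v + hbar) • (ξ * ρ.xm.eval v) := by
      rw [mul_smul_comm, ← sub_smul]; congr 1; ring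
    have e2 : (u - hbar) • (ρ.xm.eval v * ξ) - (v • ρ.xm.eval v) * ξ
        = (u - v - hbar) • (ρ.xm.eval v * ξ) := by
      rw [smul_mul_assoc, ← sub_smul]; congr 1; ring
    rw [hF]
    simp only [e1, e2]
    rw [hrel, sub_self]
  have hlim : Tendsto F (cocompact ℂ)
      (𝓝 (((u + hbar) • (ξ * (0 : V →L[ℂ] V)) - ξ * ρ.Xm)
        - (((u - hbar) • ((0 : V →L[ℂ] V) * ξ) - ρ.Xm * ξ) + (2 * hbar) • (P * ξ)))) := by
    apply Tendsto.sub
    · exact ((tendsto_const_nhds.mul ρ.xm_lim).const_smul _).sub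
        (tendsto_const_nhds.mul ρ.Xm_lim)
    · exact (((ρ.xm_lim.mul tendsto_const_nhds).const_smul _).sub
        (ρ.Xm_lim.mul tendsto_const_nhds)).add tendsto_const_nhds
  have h0 : Tendsto F (cocompact ℂ) (𝓝 0) :=
    Tendsto.congr' (Filter.EventuallyEq.symm hev) tendsto_const_nhds
  have hkey := tendsto_nhds_unique hlim h0
  simp only [mul_zero, zero_mul, smul_zero, zero_sub] at hkey
  have h3 : -(ξ * ρ.Xm) = -(ρ.Xm * ξ) + (2 * hbar) • (P * ξ) := sub_eq_zero.mp hkey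
  have h4 : ρ.Xm * ξ - ξ * ρ.Xm = ρ.Xm * ξ + (-(ρ.Xm * ξ) + (2 * hbar) • (P * ξ)) := by
    rw [← h3]; abel
  rw [h4]; abel

lemma aux_adXp_xp (hbar : ℂ) (ρ : YangianSL2Rep hbar V) {u : ℂ} (h : ρ.xp.Dom u) :
    ρ.Xp * ρ.xp.eval u - ρ.xp.eval u * ρ.Xp = (-hbar) • (ρ.xp.eval u * ρ.xp.eval u) := by
  have h3 := ρ.rel3p u u h h
  rw [show u - u - hbar = -hbar by ring, show u - u + hbar = hbar by ring] at h3
  linear_combination (norm := module) (-(2:ℂ)⁻¹ : ℂ) • h3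

lemma aux_adXm_xm (hbar : ℂ) (ρ : YangianSL2Rep hbar V) {u : ℂ} (h : ρ.xm.Dom u) :
    ρ.Xm * ρ.xm.eval u - ρ.xm.eval u * ρ.Xm = hbar • (ρ.xm.eval u * ρ.xm.eval u) := by
  have h3 := ρ.rel3m u u h h
  rw [show u - u - hbar = -hbar by ring, show u - u + hbar = hbar by ring] at h3
  linear_combination (norm := module) (-(2:ℂ)⁻¹ : ℂ) • h3

lemma aux_swap_p (hbar : ℂ) (hhbar : hbar ≠ 0) (ρ : YangianSL2Rep hbar V) {u : ℂ}
    (h1 : ρ.xi.Dom u) (h2 : ρ.xp.Dom (u + hbar)) (h3 : ρ.xp.Dom (u - hbar)) :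
    ρ.xi.eval u * ρ.xp.eval (u + hbar) = ρ.xp.eval (u - hbar) * ρ.xi.eval u := by
  have h := ρ.rel2p u (u + hbar) h1 h2 h3
  rw [show u - (u + hbar) - hbar = -(2 * hbar) by ring,
    show u - (u + hbar) + hbar = 0 by ring, zero_smul, zero_sub, ← neg_smul] at h
  exact smul_right_injective (V →L[ℂ] V)
    (neg_ne_zero.mpr (mul_ne_zero two_ne_zero hhbar)) h

lemma aux_goal_a (hbar : ℂ) (hhbar : hbar ≠ 0) (ρ : YangianSL2Rep hbar V) :
    ∀ u : ℂ, ρ.xi.Dom u → ρ.xp.Dom (u + hbar) →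
      ρ.Xp * ρ.xi.eval u - ρ.xi.eval u * ρ.Xp =
        (-(2 * hbar)) • (ρ.xi.eval u * ρ.xp.eval (u + hbar)) := by
  intro u h1 h2
  set S : Set ℂ := {z | ¬ ρ.xi.Dom z} ∪ ({z | ¬ ρ.xp.Dom (z + hbar)} ∪ {z | ¬ ρ.xp.Dom (z - hbar)})
    with hS
  have hSfin : S.Finite := by
    refine (aux_bad_finite ρ.xi).union (Set.Finite.union ?_ ?_)
    · exact (aux_bad_finite ρ.xp).preimage ((add_left_injective hbar).injOn)
    · exact (aux_bad_finite ρ.xp).preimage ((sub_left_injective).injOn)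
  set f : ℂ → (V →L[ℂ] V) := fun z => ρ.Xp * ρ.xi.eval z - ρ.xi.eval z * ρ.Xp with hf
  set g : ℂ → (V →L[ℂ] V) := fun z => (-(2 * hbar)) • (ρ.xi.eval z * ρ.xp.eval (z + hbar)) with hg
  have hkey : ∀ z, z ∉ S → f z = g z := by
    intro z hz
    rw [hS] at hz
    simp only [Set.mem_union, Set.mem_setOf_eq, not_or, not_not] at hz
    obtain ⟨d1, d2, d3⟩ := hz
    calc f z = (-(2 * hbar)) • (ρ.xp.eval (z - hbar) * ρ.xi.eval z) := aux_adXp_xi hbar ρ d1 d3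
    _ = g z := by rw [hg, ← aux_swap_p hbar hhbar ρ d1 d2 d3]
  have hxic : ContinuousAt ρ.xi.eval u := aux_continuousAt_eval ρ.xi h1
  have hfc : ContinuousAt f u := (continuousAt_const.mul hxic).sub (hxic.mul continuousAt_const)
  have hxpc : ContinuousAt (fun z : ℂ => ρ.xp.eval (z + hbar)) u :=
    Filter.Tendsto.comp (aux_continuousAt_eval ρ.xp h2)
      ((continuous_add_right hbar).continuousAt (x := u))
  have hgc : ContinuousAt g u :=
    (continuousAt_const : ContinuousAt (fun _ : ℂ => -(2 * hbar)) u).smul (hxic.mul hxpc)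
  have hne := aux_nebot S hSfin u
  have heq : f =ᶠ[𝓝[Sᶜ \ {u}] u] g := by
    filter_upwards [self_mem_nhdsWithin] with z hz
    exact hkey z hz.1
  have := tendsto_nhds_unique
    (hfc.continuousWithinAt.tendsto)
    (Filter.Tendsto.congr' heq.symm (hgc.continuousWithinAt.tendsto))
  exact this

end AuxLemmas

/-- Commutation relations between `X^± = lim u·x^±(u)` and the currents:
`(ad X⁺)ξ(u) = −2ħ ξ(u)x⁺(u+ħ)`, `(ad X⁺)x⁺(u) = −ħ x⁺(u)²`, and for all `k ≥ 0`,
`ξ(u)x⁺(u+ħ)^k = ((−1)^k/((k+1)!ħ^k))·(ad X⁺)^k ξ(u)` and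
`x⁻(u+ħ)^k ξ(u) = (1/((k+1)!ħ^k))·(ad X⁻)^k ξ(u)`. -/
theorem yangianSL2_ad_relations
    (hbar : ℂ) (hhbar : hbar ≠ 0) (V : Type)
    [NormedAddCommGroup V] [NormedSpace ℂ V] [FiniteDimensional ℂ V]
    (ρ : YangianSL2Rep hbar V) :
    (∀ u : ℂ, ρ.xi.Dom u → ρ.xp.Dom (u + hbar) →
      ρ.Xp * ρ.xi.eval u - ρ.xi.eval u * ρ.Xp =
        (-(2 * hbar)) • (ρ.xi.eval u * ρ.xp.eval (u + hbar))) ∧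
    (∀ u : ℂ, ρ.xp.Dom u →
      ρ.Xp * ρ.xp.eval u - ρ.xp.eval u * ρ.Xp =
        (-hbar) • (ρ.xp.eval u * ρ.xp.eval u)) ∧
    (∀ (k : ℕ) (u : ℂ), ρ.xi.Dom u → ρ.xp.Dom (u + hbar) →
      ρ.xi.eval u * (ρ.xp.eval (u + hbar)) ^ k =
        ((-1) ^ k / ((Nat.factorial (k + 1) : ℂ) * hbar ^ k)) •
          ((fun A : V →L[ℂ] V => ρ.Xp * A - A * ρ.Xp)^[k] (ρ.xi.eval u))) ∧
    (∀ (k : ℕ) (u : ℂ), ρ.xi.Dom u → ρ.xm.Dom (u + hbar) →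
      (ρ.xm.eval (u + hbar)) ^ k * ρ.xi.eval u =
        (1 / ((Nat.factorial (k + 1) : ℂ) * hbar ^ k)) •
          ((fun A : V →L[ℂ] V => ρ.Xm * A - A * ρ.Xm)^[k] (ρ.xi.eval u))) := by
  refine ⟨aux_goal_a hbar hhbar ρ, fun u h => aux_adXp_xp hbar ρ h, ?_, ?_⟩
  · intro k u h1 h2
    have hξ := aux_goal_a hbar hhbar ρ u h1 h2
    have hp := aux_adXp_xp hbar ρ h2
    rw [aux_iter_p hbar ρ.Xp (ρ.xi.eval u) (ρ.xp.eval (u + hbar)) hξ hp k, smul_smul]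
    have hN : ((Nat.factorial (k + 1) : ℂ)) ≠ 0 :=
      Nat.cast_ne_zero.mpr (Nat.factorial_ne_zero _)
    have hh : hbar ^ k ≠ 0 := pow_ne_zero _ hhbar
    have h11 : (-1 : ℂ) ^ k * (-1) ^ k = 1 := by
      rw [← pow_add]; exact Even.neg_one_pow ⟨k, rfl⟩
    have hc : (-1 : ℂ) ^ k / ((Nat.factorial (k + 1) : ℂ) * hbar ^ k) *
        ((-1) ^ k * (Nat.factorial (k + 1) : ℂ) * hbar ^ k) = 1 := by
      rw [div_mul_eq_mul_div, div_eq_one_iff_eq (mul_ne_zero hN hh),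
        show (-1 : ℂ) ^ k * ((-1) ^ k * (Nat.factorial (k + 1) : ℂ) * hbar ^ k)
          = ((-1 : ℂ) ^ k * (-1) ^ k) * ((Nat.factorial (k + 1) : ℂ) * hbar ^ k) by ring,
        h11, one_mul]
    rw [hc, one_smul]
  · intro k u h1 h2
    have hξ := aux_adXm_xi hbar ρ h1 h2
    have hp := aux_adXm_xm hbar ρ h2
    rw [aux_iter_m hbar ρ.Xm (ρ.xi.eval u) (ρ.xm.eval (u + hbar)) hξ hp k, smul_smul]
    have hN : ((Nat.factorial (k + 1) : ℂ)) ≠ 0 :=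
      Nat.cast_ne_zero.mpr (Nat.factorial_ne_zero _)
    have hh : hbar ^ k ≠ 0 := pow_ne_zero _ hhbar
    rw [one_div_mul_cancel (mul_ne_zero hN hh), one_smul]
end

section
/- Let W be a finite-dimensional complex vector space, let N ≥ 0 be an integer, and let w_0, …, w_N ∈ W with w_N ≠ 0. Suppose there exist an endomorphism X ∈ End(W) and nonzero complex numbers x_0, …, x_N such that X(w_n) = Σ_{p=0}^{N−n} x_p·w_{n+p} for every 0 ≤ n ≤ N. Then the vectors w_0, …, w_N are linearly independent. -/
/-- If `w_0, …, w_N` in a finite-dimensional complex vector space `W`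
satisfy `X w_n = Σ_{p=0}^{N−n} x_p • w_{n+p}` for an endomorphism `X` and nonzero scalars
`x_0, …, x_N`, and `w_N ≠ 0`, then `w_0, …, w_N` are linearly independent. -/
theorem linearIndependent_of_shift_relation
    (W : Type) [AddCommGroup W] [Module ℂ W] [FiniteDimensional ℂ W]
    (N : ℕ) (w : ℕ → W) (hwN : w N ≠ 0)
    (X : Module.End ℂ W) (x : ℕ → ℂ) (hx : ∀ p : ℕ, p ≤ N → x p ≠ 0)
    (hX : ∀ n : ℕ, n ≤ N → X (w n) = ∑ p ∈ Finset.range (N - n + 1), x p • w (n + p)) :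
    LinearIndependent ℂ (fun i : Fin (N + 1) => w i) := by
  set Y : Module.End ℂ W := X - x 0 • 1 with hYdef
  -- action of Y on the w's
  have hY : ∀ m, m ≤ N → Y (w m) = ∑ p ∈ Finset.Ico 1 (N - m + 1), x p • w (m + p) := by
    intro m hm
    have h1 : (0:ℕ) < N - m + 1 := Nat.succ_pos _
    have hXm := hX m hm
    rw [Finset.range_eq_Ico, Finset.sum_eq_sum_Ico_succ_bot h1] at hXm
    rw [hYdef]
    simp only [LinearMap.sub_apply, LinearMap.smul_apply, Module.End.one_apply]
    rw [hXm, Nat.add_zero, add_sub_cancel_left]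
  have hYN : Y (w N) = 0 := by
    rw [hY N le_rfl]
    simp [Nat.sub_self]
  -- the descending submodules
  set S : ℕ → Submodule ℂ W := fun m => Submodule.span ℂ (w '' Set.Icc m N) with hSdef
  have hStop : S (N + 1) = ⊥ := by
    simp [hSdef, Set.Icc_eq_empty_of_lt (Nat.lt_succ_self N)]
  have hSmap : ∀ m, ∀ v ∈ S m, Y v ∈ S (m + 1) := by
    intro m v hv
    induction hv using Submodule.span_induction with
    | mem u hu =>
      obtain ⟨j, hj, rfl⟩ := hu
      obtain ⟨hj1, hj2⟩ := hj
      rw [hY j hj2]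
      refine Submodule.sum_mem _ (fun p hp => Submodule.smul_mem _ _ ?_)
      refine Submodule.subset_span ⟨j + p, ⟨?_, ?_⟩, rfl⟩
      · have := (Finset.mem_Ico.mp hp).1; omega
      · have := (Finset.mem_Ico.mp hp).2; omega
    | zero => simp
    | add u v _ _ hu hv => rw [map_add]; exact Submodule.add_mem _ hu hv
    | smul a u _ hu => rw [map_smul]; exact Submodule.smul_mem _ _ hu
  -- leading-term lemma
  have lead : ∀ k n, n + k ≤ N →
      ∃ e ∈ S (n + k + 1), (Y ^ k) (w n) = x 1 ^ k • w (n + k) + e := by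
    intro k
    induction k with
    | zero =>
      intro n hn
      exact ⟨0, Submodule.zero_mem _, by simp⟩
    | succ k ih =>
      intro n hn
      obtain ⟨e, he, heq⟩ := ih n (by omega)
      have h2 : (1:ℕ) < N - (n + k) + 1 := by omega
      have hYw : Y (w (n + k)) = x 1 • w (n + k + 1)
          + ∑ p ∈ Finset.Ico 2 (N - (n + k) + 1), x p • w (n + k + p) := by
        rw [hY (n + k) (by omega), Finset.sum_eq_sum_Ico_succ_bot h2]
      have ht : (∑ p ∈ Finset.Ico 2 (N - (n + k) + 1), x p • w (n + k + p)) ∈ S (n + k + 2) := by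
        refine Submodule.sum_mem _ (fun p hp => Submodule.smul_mem _ _ ?_)
        refine Submodule.subset_span ⟨n + k + p, ⟨?_, ?_⟩, rfl⟩
        · have := (Finset.mem_Ico.mp hp).1; omega
        · have := (Finset.mem_Ico.mp hp).2; omega
      refine ⟨x 1 ^ k • (∑ p ∈ Finset.Ico 2 (N - (n + k) + 1), x p • w (n + k + p)) + Y e,
        ?_, ?_⟩
      · have : n + (k + 1) + 1 = (n + k + 1) + 1 := by omega
        rw [this]
        exact Submodule.add_mem _
          (Submodule.smul_mem _ _ (by
            have : n + k + 2 = (n + k + 1) + 1 := by omega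
            have h := ht; rw [this] at h
            exact Submodule.span_mono (Set.image_mono (Set.Icc_subset_Icc (by omega) le_rfl)) h))
          (hSmap _ _ he)
      · rw [pow_succ', Module.End.mul_apply, heq, map_add, map_smul, hYw]
        rw [smul_add, ← smul_assoc, smul_eq_mul, ← pow_succ]
        have : n + (k + 1) = n + k + 1 := by omega
        rw [this]
        abel
  -- exact top form
  have hTop : ∀ n, n ≤ N → (Y ^ (N - n)) (w n) = x 1 ^ (N - n) • w N := by
    intro n hn
    obtain ⟨e, he, heq⟩ := lead (N - n) n (by omega)
    have hnk : n + (N - n) = N := by omega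
    rw [hnk] at he heq
    rw [hStop, Submodule.mem_bot] at he
    rw [heq, he, add_zero]
  -- Y^(N-n) kills w m for n < m ≤ N
  have hKill : ∀ m n : ℕ, n < m → m ≤ N → (Y ^ (N - n)) (w m) = 0 := by
    intro m n hnm hm
    have h1 : (Y ^ (N - m + 1)) (w m) = 0 := by
      rw [pow_succ', Module.End.mul_apply, hTop m hm, map_smul, hYN, smul_zero]
    have hsum : N - n = (N - n - (N - m + 1)) + (N - m + 1) := by omega
    rw [hsum, pow_add, Module.End.mul_apply, h1, map_zero]
  -- conclusion
  rw [Fintype.linearIndependent_iff]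
  intro g hg
  have main : ∀ k : ℕ, ∀ i : Fin (N + 1), (i : ℕ) = k → g i = 0 := by
    intro k
    induction k using Nat.strong_induction_on with
    | _ k ih =>
      intro i hik
      have hiN : (i : ℕ) ≤ N := by omega
      have h0 : (Y ^ (N - (i : ℕ))) (∑ j, g j • w (j : ℕ)) = 0 := by rw [hg, map_zero]
      rw [map_sum] at h0
      have hterm : ∀ j : Fin (N + 1),
          (Y ^ (N - (i : ℕ))) (g j • w (j : ℕ))
            = if j = i then (g i * x 1 ^ (N - (i : ℕ))) • w N else 0 := by
        intro j
        rcases lt_trichotomy (j : ℕ) (i : ℕ) with h | h | h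
        · rw [if_neg (by intro hji; rw [hji] at h; exact lt_irrefl _ h)]
          rw [map_smul, ih j (by omega) j rfl, zero_smul]
        · have hji : j = i := Fin.ext h
          rw [if_pos hji, hji, map_smul, hTop (i : ℕ) hiN, smul_smul]
        · rw [if_neg (by intro hji; rw [hji] at h; exact lt_irrefl _ h)]
          rw [map_smul, hKill (j : ℕ) (i : ℕ) h (by omega), smul_zero]
      rw [Finset.sum_congr rfl (fun j _ => hterm j)] at h0
      rw [Finset.sum_ite_eq' Finset.univ i (fun _ => (g i * x 1 ^ (N - (i : ℕ))) • w N),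
        if_pos (Finset.mem_univ i)] at h0
      have hx1 : x 1 ^ (N - (i : ℕ)) ≠ 0 := by
        rcases Nat.eq_zero_or_pos (N - (i : ℕ)) with h | h
        · rw [h, pow_zero]; exact one_ne_zero
        · exact pow_ne_zero _ (hx 1 (by omega))
      rcases smul_eq_zero.mp h0 with h | h
      · rcases mul_eq_zero.mp h with h | h
        · exact h
        · exact absurd h hx1
      · exact absurd h hwN
  exact fun i => main (i : ℕ) i rfl
end

section
/- Let κ > 0 be a real number, let ħ be a nonzero complex number, and let a : ℤ → ℤ be a finitely supported function. Suppose that Σ_{r ∈ ℤ} a(r)·Ψ_κ(u + rħ/2) = 0 for every u ∈ ℂ such that (u + rħ/2)/(2κħ) is not a nonpositive integer for every r in the support of a. Then a = 0. -/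
open Complex Filter Topology Set

noncomputable section

lemma isClosed_negNatCast : IsClosed (Set.range fun m : ℕ => -(m : ℂ)) := by
  have h : Topology.IsClosedEmbedding (fun m : ℕ => -(m : ℂ)) := by
    apply Metric.isClosedEmbedding_of_pairwise_le_dist zero_lt_one
    intro m n hmn
    have h1 : dist (-(m : ℂ)) (-(n : ℂ)) = |((m : ℝ) - n)| := by
      rw [Complex.dist_eq]
      have : (-(m : ℂ)) - (-(n : ℂ)) = (((n : ℝ) - (m : ℝ) : ℝ) : ℂ) := by push_cast; ring
      rw [this, Complex.norm_real, Real.norm_eq_abs, abs_sub_comm]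
    rw [h1]
    have h2 : ((m : ℝ) - n) = (((m : ℤ) - n : ℤ) : ℝ) := by push_cast; ring
    rw [h2, ← Int.cast_abs]
    have hne : ((m : ℤ) - n : ℤ) ≠ 0 := sub_ne_zero.2 (by exact_mod_cast hmn)
    exact_mod_cast Int.one_le_abs hne
  exact h.isClosed_range

lemma isOpen_goodSet : IsOpen {s : ℂ | ∀ m : ℕ, s ≠ -(m : ℂ)} := by
  have : {s : ℂ | ∀ m : ℕ, s ≠ -(m : ℂ)} = (Set.range fun m : ℕ => -(m : ℂ))ᶜ := by
    ext s
    simp only [Set.mem_setOf_eq, Set.mem_compl_iff, Set.mem_range, not_exists]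
    constructor
    · intro h m hm; exact h m hm.symm
    · intro h m hm; exact h m hm.symm
  rw [this]
  exact isClosed_negNatCast.isOpen_compl

lemma analyticAt_Gamma' {s : ℂ} (hs : ∀ m : ℕ, s ≠ -(m : ℂ)) :
    AnalyticAt ℂ Complex.Gamma s :=
  DifferentiableOn.analyticAt
    (fun z hz => (Complex.differentiableAt_Gamma z hz).differentiableWithinAt)
    (isOpen_goodSet.mem_nhds hs)

lemma continuousAt_deriv_Gamma' {s : ℂ} (hs : ∀ m : ℕ, s ≠ -(m : ℂ)) :
    ContinuousAt (deriv Complex.Gamma) s := by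
  have h1 : AnalyticAt ℂ (fderiv ℂ Complex.Gamma) s := (analyticAt_Gamma' hs).fderiv
  have h2 : ContinuousAt (fun z => fderiv ℂ Complex.Gamma z 1) s := by
    exact (ContinuousLinearMap.apply ℂ ℂ (1 : ℂ)).continuous.continuousAt.comp h1.continuousAt
  have h3 : (fun z => fderiv ℂ Complex.Gamma z 1) = deriv Complex.Gamma :=
    funext fun z => fderiv_apply_one_eq_deriv
  rwa [h3] at h2

lemma continuousAt_digamma {s : ℂ} (hs : ∀ m : ℕ, s ≠ -(m : ℂ)) :
    ContinuousAt (fun z => deriv Complex.Gamma z / Complex.Gamma z) s :=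
  (continuousAt_deriv_Gamma' hs).div
    (Complex.differentiableAt_Gamma s hs).continuousAt (Complex.Gamma_ne_zero hs)

lemma tendsto_self_mul_digamma :
    Tendsto (fun z : ℂ => z * (deriv Complex.Gamma z / Complex.Gamma z))
      (𝓝[≠] (0 : ℂ)) (𝓝 (-1)) := by
  have hgood1 : ∀ m : ℕ, (0 : ℂ) + 1 ≠ -(m : ℂ) := by
    intro m hm
    have := congrArg Complex.re hm
    simp only [add_re, zero_re, one_re, neg_re, natCast_re] at this
    have : (0:ℝ) + 1 ≤ 0 := by rw [this]; simp [Nat.cast_nonneg]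
    linarith
  have hadd : ContinuousAt (fun z : ℂ => z + 1) 0 := by fun_prop
  have hcont : ContinuousAt
      (fun z : ℂ => (deriv Complex.Gamma (z + 1) * z - Complex.Gamma (z + 1)) /
        Complex.Gamma (z + 1)) 0 := by
    have hd : ContinuousAt (fun z : ℂ => deriv Complex.Gamma (z + 1)) 0 :=
      ContinuousAt.comp (x := (0 : ℂ)) (continuousAt_deriv_Gamma' hgood1) hadd
    have hg : ContinuousAt (fun z : ℂ => Complex.Gamma (z + 1)) 0 :=
      ContinuousAt.comp (x := (0 : ℂ)) (Complex.differentiableAt_Gamma _ hgood1).continuousAt hadd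
    exact ((hd.mul continuousAt_id).sub hg).div hg (Complex.Gamma_ne_zero hgood1)
  have hval : (deriv Complex.Gamma ((0:ℂ) + 1) * 0 - Complex.Gamma ((0:ℂ) + 1)) /
      Complex.Gamma ((0:ℂ) + 1) = -1 := by
    norm_num [Complex.Gamma_one]
  have T : Tendsto (fun z : ℂ => (deriv Complex.Gamma (z + 1) * z - Complex.Gamma (z + 1)) /
      Complex.Gamma (z + 1)) (𝓝 0) (𝓝 (-1)) := by
    have := hcont.tendsto
    rwa [hval] at this
  refine (T.mono_left nhdsWithin_le_nhds).congr' ?_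
  have hball : Metric.ball (0 : ℂ) 1 ∈ 𝓝[≠] (0 : ℂ) :=
    nhdsWithin_le_nhds (Metric.ball_mem_nhds _ one_pos)
  filter_upwards [hball, self_mem_nhdsWithin] with z hz1 hz2
  simp only [Set.mem_compl_iff, Set.mem_singleton_iff] at hz2
  rw [mem_ball_zero_iff] at hz1
  have habs : ‖z‖ < 1 := hz1
  have hzgood : ∀ m : ℕ, z ≠ -(m : ℂ) := by
    intro m hm
    rcases Nat.eq_zero_or_pos m with h0 | h0
    · subst h0; simp at hm; exact hz2 hm
    · have : ‖z‖ = m := by rw [hm]; simp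
      rw [this] at habs
      exact absurd habs (not_lt.2 (by exact_mod_cast h0))
  have hz1good : ∀ m : ℕ, z + 1 ≠ -(m : ℂ) := by
    intro m hm
    have hre := congrArg Complex.re hm
    simp only [add_re, one_re, neg_re, natCast_re] at hre
    have h1 : |z.re| ≤ ‖z‖ := Complex.abs_re_le_norm z
    have h2 : (0:ℝ) ≤ m := Nat.cast_nonneg m
    have : z.re + 1 > 0 := by
      have : -1 < z.re := by
        have := abs_lt.1 (lt_of_le_of_lt h1 habs)
        linarith [this.1]
      linarith
    linarith [hre ▸ this]
  have hΓz1 : Complex.Gamma (z + 1) ≠ 0 := Complex.Gamma_ne_zero hz1good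
  have hΓz : Complex.Gamma z ≠ 0 := Complex.Gamma_ne_zero hzgood
  have hDzp1 : HasDerivAt Complex.Gamma (deriv Complex.Gamma (z + 1)) (z + 1) :=
    (Complex.differentiableAt_Gamma _ hz1good).hasDerivAt
  have hcomp : HasDerivAt (fun w : ℂ => Complex.Gamma (w + 1))
      (deriv Complex.Gamma (z + 1)) z := by
    exact (hDzp1.comp z ((hasDerivAt_id z).add_const 1)).congr_deriv (by simp)
  have hdiv : HasDerivAt (fun w : ℂ => Complex.Gamma (w + 1) / w)
      ((deriv Complex.Gamma (z + 1) * z - Complex.Gamma (z + 1) * 1) / z ^ 2) z :=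
    hcomp.div (hasDerivAt_id z) hz2
  have hEq : Complex.Gamma =ᶠ[𝓝 z] fun w => Complex.Gamma (w + 1) / w := by
    filter_upwards [isOpen_compl_singleton.mem_nhds hz2] with w hw
    simp only [Set.mem_compl_iff, Set.mem_singleton_iff] at hw
    rw [Complex.Gamma_add_one w hw]
    field_simp
  have hderiv : deriv Complex.Gamma z =
      (deriv Complex.Gamma (z + 1) * z - Complex.Gamma (z + 1) * 1) / z ^ 2 := by
    rw [hEq.deriv_eq]; exact hdiv.deriv
  have hG : Complex.Gamma z = Complex.Gamma (z + 1) / z := by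
    rw [Complex.Gamma_add_one z hz2]; field_simp
  rw [hderiv, hG]
  field_simp

/-- If a finitely supported integer combination of translates
`Ψ_κ(u + rħ/2)` of the digamma-type function `Ψ_κ(z) = Γ′(z/(2κħ))/Γ(z/(2κħ))` vanishes
for every admissible `u`, then all coefficients vanish. -/
theorem digamma_translates_linearIndependent
    (κ : ℝ) (hκ : 0 < κ) (hbar : ℂ) (hhbar : hbar ≠ 0) (a : ℤ →₀ ℤ)
    (h : ∀ u : ℂ,
      (∀ r ∈ a.support, ∀ m : ℤ, m ≤ 0 →
        (u + (r : ℂ) * hbar / 2) / (2 * (κ : ℂ) * hbar) ≠ (m : ℂ)) →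
      ∑ r ∈ a.support,
        (a r : ℂ) *
          (deriv Complex.Gamma ((u + (r : ℂ) * hbar / 2) / (2 * (κ : ℂ) * hbar)) /
            Complex.Gamma ((u + (r : ℂ) * hbar / 2) / (2 * (κ : ℂ) * hbar))) = 0) :
    a = 0 := by
  by_contra ha
  have hSne : a.support.Nonempty := Finsupp.support_nonempty_iff.mpr ha
  set r₀ : ℤ := a.support.min' hSne with hr₀def
  have hr₀S : r₀ ∈ a.support := a.support.min'_mem hSne
  have hκ0 : (κ : ℂ) ≠ 0 := by exact_mod_cast hκ.ne'
  set c : ℂ := 2 * (κ : ℂ) * hbar with hc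
  have hcne : c ≠ 0 := by
    rw [hc]
    exact mul_ne_zero (mul_ne_zero two_ne_zero hκ0) hhbar
  set u₀ : ℂ := -(r₀ : ℂ) * hbar / 2 with hu₀
  set A : Set ℂ := {u | ∀ r ∈ a.support, ∀ m : ℤ, m ≤ 0 →
      (u + (r : ℂ) * hbar / 2) / c ≠ (m : ℂ)} with hA
  set B : Set ℂ := Aᶜ ∪ {u₀} with hB
  have hBcount : B.Countable := by
    have h1 : Aᶜ ⊆ ⋃ r ∈ a.support, ⋃ m : ℤ,
        ({(m : ℂ) * c - (r : ℂ) * hbar / 2} : Set ℂ) := by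
      intro u hu
      simp only [hA, Set.mem_compl_iff, Set.mem_setOf_eq] at hu
      push_neg at hu
      obtain ⟨r, hr, m, _, hmeq⟩ := hu
      have : u = (m : ℂ) * c - (r : ℂ) * hbar / 2 := by
        rw [div_eq_iff hcne] at hmeq
        linear_combination hmeq
      simp only [Set.mem_iUnion, Set.mem_singleton_iff]
      exact ⟨r, hr, m, this⟩
    have h2 : (⋃ r ∈ a.support, ⋃ m : ℤ,
        ({(m : ℂ) * c - (r : ℂ) * hbar / 2} : Set ℂ)).Countable :=
      (a.support : Set ℤ).to_countable.biUnion
        (fun r _ => Set.countable_iUnion fun m => Set.countable_singleton _)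
    exact ((h2.mono h1).union (Set.countable_singleton u₀))
  have hdense : Dense Bᶜ := hBcount.dense_compl ℂ
  have hNeBot : (𝓝[Bᶜ] u₀).NeBot := by
    rw [← mem_closure_iff_nhdsWithin_neBot]
    exact hdense u₀
  have hsub : ∀ u ∈ Bᶜ, u ∈ A ∧ u ≠ u₀ := by
    intro u hu
    simp only [hB, Set.mem_compl_iff, Set.mem_union, not_or, Set.mem_singleton_iff] at hu
    exact ⟨not_not.mp hu.1, hu.2⟩
  set G : ℂ → ℂ := fun u => ∑ r ∈ a.support,
      (a r : ℂ) * ((u - u₀) *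
        (deriv Complex.Gamma ((u + (r : ℂ) * hbar / 2) / c) /
          Complex.Gamma ((u + (r : ℂ) * hbar / 2) / c))) with hG
  -- first limit: G tends to 0
  have T1 : Filter.Tendsto G (𝓝[Bᶜ] u₀) (𝓝 0) := by
    apply Filter.Tendsto.congr' (f₁ := fun _ => (0 : ℂ))
    · filter_upwards [self_mem_nhdsWithin] with u hu
      obtain ⟨huA, _⟩ := hsub u hu
      have h0 := h u huA
      have : G u = (u - u₀) * ∑ r ∈ a.support,
          (a r : ℂ) *
            (deriv Complex.Gamma ((u + (r : ℂ) * hbar / 2) / c) /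
              Complex.Gamma ((u + (r : ℂ) * hbar / 2) / c)) := by
        rw [hG, Finset.mul_sum]
        exact Finset.sum_congr rfl fun r _ => by ring
      rw [this, h0, mul_zero]
    · exact tendsto_const_nhds
  -- second limit
  set L : ℤ → ℂ := fun r => if r = r₀ then (a r₀ : ℂ) * (c * (-1)) else 0 with hL
  have T2 : Filter.Tendsto G (𝓝[Bᶜ] u₀) (𝓝 (∑ r ∈ a.support, L r)) := by
    rw [hG]
    apply tendsto_finset_sum
    intro r hr
    by_cases hrr : r = r₀
    · subst hrr
      have key : ∀ u : ℂ, u + (r₀ : ℂ) * hbar / 2 = u - u₀ := by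
        intro u; rw [hu₀]; ring
      have hz : Filter.Tendsto (fun u : ℂ => (u - u₀) / c) (𝓝[Bᶜ] u₀) (𝓝[≠] 0) := by
        rw [tendsto_nhdsWithin_iff]
        constructor
        · apply Filter.Tendsto.mono_left _ nhdsWithin_le_nhds
          have : Continuous (fun u : ℂ => (u - u₀) / c) := by fun_prop
          have h0 : (u₀ - u₀) / c = 0 := by simp
          exact h0 ▸ this.tendsto u₀
        · filter_upwards [self_mem_nhdsWithin] with u hu
          obtain ⟨_, hne⟩ := hsub u hu
          exact div_ne_zero (sub_ne_zero.2 hne) hcne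
      have hmain : Filter.Tendsto
          (fun u : ℂ => ((u - u₀) / c) *
            (deriv Complex.Gamma ((u - u₀) / c) / Complex.Gamma ((u - u₀) / c)))
          (𝓝[Bᶜ] u₀) (𝓝 (-1)) := tendsto_self_mul_digamma.comp hz
      have hmul := hmain.const_mul ((a r₀ : ℂ) * c)
      have hLval : L r₀ = (a r₀ : ℂ) * c * -1 := by simp [hL]
      rw [hLval]
      refine hmul.congr' ?_
      filter_upwards with u
      rw [key u]
      generalize deriv Complex.Gamma ((u - u₀) / c) / Complex.Gamma ((u - u₀) / c) = D
      field_simp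
    · -- r ≠ r₀ : the term tends to 0
      have hlt : r₀ < r := lt_of_le_of_ne (a.support.min'_le r hr) (Ne.symm hrr)
      have hw : (u₀ + (r : ℂ) * hbar / 2) / c
          = ((((r - r₀ : ℤ) : ℝ) / (4 * κ) : ℝ) : ℂ) := by
        rw [hu₀, hc]
        push_cast
        field_simp
        ring
      have hgood : ∀ m : ℕ, (u₀ + (r : ℂ) * hbar / 2) / c ≠ -(m : ℂ) := by
        intro m hm
        rw [hw] at hm
        have hre := congrArg Complex.re hm
        simp only [Complex.ofReal_re, Complex.neg_re, Complex.natCast_re] at hre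
        have hpos : 0 < ((r - r₀ : ℤ) : ℝ) / (4 * κ) := by
          apply div_pos
          · exact_mod_cast sub_pos.2 hlt
          · linarith
        have : (0:ℝ) ≤ m := Nat.cast_nonneg m
        rw [hre] at hpos
        linarith
      have hcontψ : ContinuousAt
          (fun u : ℂ => deriv Complex.Gamma ((u + (r : ℂ) * hbar / 2) / c) /
            Complex.Gamma ((u + (r : ℂ) * hbar / 2) / c)) u₀ := by
        exact ContinuousAt.comp (x := u₀) (continuousAt_digamma hgood) (by fun_prop)
      have hsubt : Filter.Tendsto (fun u : ℂ => u - u₀) (𝓝[Bᶜ] u₀) (𝓝 0) := by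
        apply Filter.Tendsto.mono_left _ nhdsWithin_le_nhds
        have : Continuous (fun u : ℂ => u - u₀) := by fun_prop
        have h0 : u₀ - u₀ = 0 := by simp
        exact h0 ▸ this.tendsto u₀
      have hψt := hcontψ.tendsto.mono_left (nhdsWithin_le_nhds (s := Bᶜ))
      have := (hsubt.mul hψt).const_mul ((a r : ℂ))
      simp only [mul_zero, zero_mul] at this
      have hL0 : L r = 0 := if_neg hrr
      rw [hL0]
      simpa using this
  have huniq := tendsto_nhds_unique T1 T2
  have hsum : ∑ r ∈ a.support, L r = (a r₀ : ℂ) * (c * (-1)) := by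
    rw [hL, Finset.sum_ite_eq' a.support r₀ (fun _ => (a r₀ : ℂ) * (c * (-1)))]
    simp [hr₀S]
  rw [hsum] at huniq
  have har₀ : (a r₀ : ℂ) = 0 := by
    rcases mul_eq_zero.mp huniq.symm with h1 | h2
    · exact h1
    · exact absurd h2 (by simp [hcne])
  have : a r₀ = 0 := by exact_mod_cast har₀
  exact (Finsupp.mem_support_iff.mp hr₀S) this
end
end

section
/- Let ℓ, d, d′ be positive integers, and let c(q), c*(q) ∈ ℚ[q, q⁻¹] be Laurent polynomials that are invariant under the substitution q ↦ q⁻¹. In the field of rational functions ℚ(q), set v(q) := [d]_q·c(q)/[ℓ]_q and v*(q) := [d]_q·c*(q)/[ℓ]_q, and regard v and v* as formal Laurent series in q via the Laurent-series expansion of rational functions at q = 0; assume that v and v* have no nonzero coefficients in negative degrees, and write v^{(s)} and v*^{(s)} for their coefficients of q^s. Assume moreover that p(q) := ((q^{2d} − 1)/(q^{2ℓ} − 1))·(q^ℓ·c(q) + c*(q)) is a Laurent polynomial of the form p(q) = Σ_{r = d′−d}^{ℓ−d′−d} m_r·q^{−r} with m_r ∈ ℚ. Then for every integer r with d′ − d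 ≤ r ≤ ℓ − d′ − d one has m_r = v^{(r+d)} and m_r = v*^{(ℓ − d − r)}. -/
noncomputable section

/-- The quantum integer `[m]_q = Σ_{k=0}^{m−1} q^{m−1−2k}` as a formal Laurent series. -/
def qInt (m : ℕ) : LaurentSeries ℚ :=
  ∑ k ∈ Finset.range m, HahnSeries.single ((m : ℤ) - 1 - 2 * (k : ℤ)) (1 : ℚ)

/-- The Laurent polynomial with (finitely supported) coefficient function `c`, viewed as a
Laurent series. -/
def ofLaurentCoeffs (c : ℤ →₀ ℚ) : LaurentSeries ℚ :=
  ∑ r ∈ c.support, HahnSeries.single r (c r)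

/-- `q^n` as a Laurent series. -/
def qPow (n : ℤ) : LaurentSeries ℚ := HahnSeries.single n (1 : ℚ)

lemma qPow_mul (a b : ℤ) : qPow a * qPow b = qPow (a + b) := by
  simp [qPow, HahnSeries.single_mul_single]

lemma qPow_ne_zero (a : ℤ) : qPow a ≠ 0 :=
  HahnSeries.single_ne_zero one_ne_zero

lemma coeff_sum {α : Type*} (t : Finset α) (f : α → LaurentSeries ℚ) (s : ℤ) :
    (∑ x ∈ t, f x).coeff s = ∑ x ∈ t, (f x).coeff s :=
  map_sum (HahnSeries.coeff.addMonoidHom s) f t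

lemma ofLaurentCoeffs_coeff (c : ℤ →₀ ℚ) (s : ℤ) : (ofLaurentCoeffs c).coeff s = c s := by
  rw [ofLaurentCoeffs, coeff_sum]
  rw [Finset.sum_eq_single s]
  · simp
  · intro b _ hb; simp [HahnSeries.coeff_single, hb.symm]
  · intro h; simpa [HahnSeries.coeff_single] using Finsupp.notMem_support_iff.mp h

lemma telescope (n : ℕ) :
    (qPow 1 - qPow (-1)) * qInt n = qPow n - qPow (-(n : ℤ)) := by
  rw [qInt, Finset.mul_sum]
  have : ∀ k ∈ Finset.range n,
      (qPow 1 - qPow (-1)) * HahnSeries.single ((n : ℤ) - 1 - 2 * (k : ℤ)) (1 : ℚ) =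
      qPow ((n : ℤ) - 2 * k) - qPow ((n : ℤ) - 2 * (k + 1)) := by
    intro k _
    have h1 : qPow 1 * HahnSeries.single ((n : ℤ) - 1 - 2 * (k : ℤ)) (1 : ℚ)
        = qPow ((n : ℤ) - 2 * k) := by
      show qPow 1 * qPow _ = _
      rw [qPow_mul]; ring_nf
    have h2 : qPow (-1) * HahnSeries.single ((n : ℤ) - 1 - 2 * (k : ℤ)) (1 : ℚ)
        = qPow ((n : ℤ) - 2 * (k + 1)) := by
      show qPow (-1) * qPow _ = _
      rw [qPow_mul]; ring_nf
    rw [sub_mul, h1, h2]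
  rw [Finset.sum_congr rfl this]
  have h3 : ∀ x ∈ Finset.range n,
      qPow ((n : ℤ) - 2 * (x:ℤ)) - qPow ((n : ℤ) - 2 * ((x:ℤ) + 1)) =
      (fun k : ℕ => qPow ((n : ℤ) - 2 * (k:ℤ))) x -
      (fun k : ℕ => qPow ((n : ℤ) - 2 * (k:ℤ))) (x + 1) := by
    intro x _
    norm_cast
  rw [Finset.sum_congr rfl h3, Finset.sum_range_sub']
  have e1 : (n:ℤ) - 2*((0:ℕ):ℤ) = (n:ℤ) := by push_cast; ring
  have e2 : (n:ℤ) - 2*((n:ℕ):ℤ) = -(n:ℤ) := by push_cast; ring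
  show qPow ((n:ℤ) - 2*((0:ℕ):ℤ)) - qPow ((n:ℤ) - 2*((n:ℕ):ℤ)) = _
  rw [e1, e2]

lemma qPow_sub_ne (a b : ℤ) (h : a ≠ b) : qPow a - qPow b ≠ 0 := by
  intro hh
  have := congrArg (fun x => HahnSeries.coeff x a) hh
  simp [qPow, HahnSeries.coeff_single, h] at this

lemma qInt_ne_zero (n : ℕ) (hn : 0 < n) : qInt n ≠ 0 := by
  intro h
  have ht := telescope n
  rw [h, mul_zero] at ht
  exact qPow_sub_ne _ _ (by omega) ht.symm

lemma qPow_two (n : ℕ) :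
    qPow (2 * (n : ℤ)) - 1 = qPow n * ((qPow 1 - qPow (-1)) * qInt n) := by
  rw [telescope, mul_sub, qPow_mul, qPow_mul]
  have h0 : qPow ((n:ℤ) + -(n:ℤ)) = 1 := by
    rw [(by ring : (n:ℤ) + -(n:ℤ) = 0)]
    exact HahnSeries.single_zero_one
  rw [h0]
  congr 2
  ring


lemma qPow_mul_coeff (a : ℤ) (x : LaurentSeries ℚ) (s : ℤ) :
    (qPow a * x).coeff s = x.coeff (s - a) := by
  have := HahnSeries.coeff_single_mul_add (r := (1:ℚ)) (x := x) (a := s - a) (b := a)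
  rw [(by ring : s - a + a = s)] at this
  rw [qPow, this, one_mul]

lemma sub_one_mul_coeff (a : ℤ) (x : LaurentSeries ℚ) (s : ℤ) :
    ((qPow a - 1) * x).coeff s = x.coeff (s - a) - x.coeff s := by
  rw [sub_mul, one_mul, HahnSeries.coeff_sub, qPow_mul_coeff]

lemma mul_sub_one_coeff (a : ℤ) (x : LaurentSeries ℚ) (s : ℤ) :
    (x * (qPow a - 1)).coeff s = x.coeff (s - a) - x.coeff s := by
  rw [mul_comm]; exact sub_one_mul_coeff a x s

lemma Mcoeff (a b : ℤ) (m : ℤ → ℚ) (s : ℤ) :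
    (∑ r ∈ Finset.Icc a b, HahnSeries.single (-r) (m r)).coeff s =
    if a ≤ -s ∧ -s ≤ b then m (-s) else 0 := by
  rw [coeff_sum]
  by_cases h : a ≤ -s ∧ -s ≤ b
  · rw [if_pos h, Finset.sum_eq_single (-s)]
    · simp [HahnSeries.coeff_single]
    · intro r hr hne
      rw [HahnSeries.coeff_single, if_neg (by omega)]
    · intro hns
      exact absurd (Finset.mem_Icc.mpr (by omega)) hns
  · rw [if_neg h, Finset.sum_eq_zero]
    intro r hr
    rw [Finset.mem_Icc] at hr
    rw [HahnSeries.coeff_single, if_neg (by omega)]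

lemma aux (ℓ d d' : ℕ) (hℓ : 0 < ℓ) (hd : 0 < d) (hd' : 0 < d')
    (c cs : ℤ →₀ ℚ) (v vs : LaurentSeries ℚ)
    (hv : v = qInt d * ofLaurentCoeffs c / qInt ℓ)
    (hvs : vs = qInt d * ofLaurentCoeffs cs / qInt ℓ)
    (hvpos : ∀ s : ℤ, s < 0 → v.coeff s = 0)
    (m : ℤ → ℚ)
    (hA : (qPow (2*(d:ℤ)) - 1) * (qPow (ℓ:ℤ) * ofLaurentCoeffs c + ofLaurentCoeffs cs)
        = (∑ r ∈ Finset.Icc ((d':ℤ)-(d:ℤ)) ((ℓ:ℤ)-(d':ℤ)-(d:ℤ)),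
            HahnSeries.single (-r) (m r)) * (qPow (2*(ℓ:ℤ)) - 1)) :
    ∀ r : ℤ, (d':ℤ)-(d:ℤ) ≤ r → r ≤ (ℓ:ℤ)-(d':ℤ)-(d:ℤ) →
      m r = vs.coeff ((ℓ:ℤ)-(d:ℤ)-r) := by
  intro r hr1 hr2
  set M := ∑ r ∈ Finset.Icc ((d':ℤ)-(d:ℤ)) ((ℓ:ℤ)-(d':ℤ)-(d:ℤ)),
      HahnSeries.single (-r) (m r) with hMdef
  have hIl : qInt ℓ ≠ 0 := qInt_ne_zero ℓ hℓ
  have hQ : qPow 1 - qPow (-1) ≠ 0 := qPow_sub_ne _ _ (by omega)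
  have hv' : v * qInt ℓ = qInt d * ofLaurentCoeffs c := by
    rw [hv]; field_simp
  have hvs' : vs * qInt ℓ = qInt d * ofLaurentCoeffs cs := by
    rw [hvs]; field_simp
  have hq : qPow ((d:ℤ)-(ℓ:ℤ)) * qPow (ℓ:ℤ) = qPow (d:ℤ) := by
    rw [qPow_mul]; congr 1; ring
  have hM : M = qPow (d:ℤ) * v + qPow ((d:ℤ)-(ℓ:ℤ)) * vs := by
    refine mul_right_cancel₀ (b := qPow (ℓ:ℤ) * ((qPow 1 - qPow (-1)) * qInt ℓ))
      (mul_ne_zero (qPow_ne_zero _) (mul_ne_zero hQ hIl)) ?_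
    rw [← qPow_two, ← hA, qPow_two d, qPow_two ℓ]
    linear_combination (-(qPow (ℓ:ℤ) * (qPow 1 - qPow (-1)) * qPow (d:ℤ))) * hv' +
      (-((qPow 1 - qPow (-1)) * qPow (d:ℤ))) * hvs' +
      (-((qPow 1 - qPow (-1)) * vs * qInt ℓ)) * hq
  have h1 : M.coeff (-r) = m r := by
    rw [hMdef, Mcoeff, if_pos (by omega), neg_neg]
  rw [← h1, hM, HahnSeries.coeff_add, qPow_mul_coeff, qPow_mul_coeff]
  rw [hvpos (-r - (d:ℤ)) (by omega), zero_add]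
  congr 1
  ring

lemma reversal (ℓ d d' : ℕ)
    (c cs : ℤ →₀ ℚ) (hc : ∀ r : ℤ, c r = c (-r)) (hcs : ∀ r : ℤ, cs r = cs (-r))
    (m : ℤ → ℚ)
    (hA : (qPow (2*(d:ℤ)) - 1) * (qPow (ℓ:ℤ) * ofLaurentCoeffs c + ofLaurentCoeffs cs)
        = (∑ r ∈ Finset.Icc ((d':ℤ)-(d:ℤ)) ((ℓ:ℤ)-(d':ℤ)-(d:ℤ)),
            HahnSeries.single (-r) (m r)) * (qPow (2*(ℓ:ℤ)) - 1)) :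
    (qPow (2*(d:ℤ)) - 1) * (qPow (ℓ:ℤ) * ofLaurentCoeffs cs + ofLaurentCoeffs c)
        = (∑ r ∈ Finset.Icc ((d':ℤ)-(d:ℤ)) ((ℓ:ℤ)-(d':ℤ)-(d:ℤ)),
            HahnSeries.single (-r) ((fun r => m ((ℓ:ℤ)-2*(d:ℤ)-r)) r)) * (qPow (2*(ℓ:ℤ)) - 1) := by
  set a := (d':ℤ)-(d:ℤ) with ha
  set b := (ℓ:ℤ)-(d':ℤ)-(d:ℤ) with hb
  set M := ∑ r ∈ Finset.Icc a b, HahnSeries.single (-r) (m r) with hM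
  set M' := ∑ r ∈ Finset.Icc a b, HahnSeries.single (-r) ((fun r => m ((ℓ:ℤ)-2*(d:ℤ)-r)) r)
    with hM'
  apply HahnSeries.coeff_injective
  funext s
  have h := congrArg (fun y : LaurentSeries ℚ => y.coeff ((2*(d:ℤ)+(ℓ:ℤ))-s)) hA
  simp only [sub_one_mul_coeff, mul_sub_one_coeff, HahnSeries.coeff_add, qPow_mul_coeff,
    ofLaurentCoeffs_coeff] at h
  show ((qPow (2*(d:ℤ)) - 1) * (qPow (ℓ:ℤ) * ofLaurentCoeffs cs + ofLaurentCoeffs c)).coeff s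
      = (M' * (qPow (2*(ℓ:ℤ)) - 1)).coeff s
  simp only [sub_one_mul_coeff, mul_sub_one_coeff, HahnSeries.coeff_add, qPow_mul_coeff,
    ofLaurentCoeffs_coeff]
  have b1 : M'.coeff (s - 2*(ℓ:ℤ)) = M.coeff (2*(d:ℤ)+(ℓ:ℤ)-s) := by
    rw [hM', hM, Mcoeff, Mcoeff]
    split_ifs with h1 h2 h3
    · show m _ = m _; congr 1; ring
    · exfalso; omega
    · exfalso; omega
    · rfl
  have b2 : M'.coeff s = M.coeff (2*(d:ℤ)+(ℓ:ℤ)-s - 2*(ℓ:ℤ)) := by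
    rw [hM', hM, Mcoeff, Mcoeff]
    split_ifs with h1 h2 h3
    · show m _ = m _; congr 1; ring
    · exfalso; omega
    · exfalso; omega
    · rfl
  rw [b1, b2]
  have e1 : c s = c (-s) := hc s
  have e2 : cs (s - (ℓ:ℤ)) = cs ((ℓ:ℤ) - s) := by
    rw [hcs (s - (ℓ:ℤ))]; congr 1; ring
  have e3 : c (s - 2*(d:ℤ)) = c (2*(d:ℤ) - s) := by
    rw [hc (s - 2*(d:ℤ))]; congr 1; ring
  have e4 : cs (s - 2*(d:ℤ) - (ℓ:ℤ)) = cs (2*(d:ℤ)+(ℓ:ℤ) - s) := by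
    rw [hcs (s - 2*(d:ℤ) - (ℓ:ℤ))]; congr 1; ring
  ring_nf at h e1 e2 e3 e4 ⊢
  linarith [h, e1, e2, e3, e4]

theorem coeffs_of_p_eq_coeffs_of_v
    (ℓ d d' : ℕ) (hℓ : 0 < ℓ) (hd : 0 < d) (hd' : 0 < d')
    (c cs : ℤ →₀ ℚ) (hc : ∀ r : ℤ, c r = c (-r)) (hcs : ∀ r : ℤ, cs r = cs (-r))
    (v vs : LaurentSeries ℚ)
    (hv : v = qInt d * ofLaurentCoeffs c / qInt ℓ)
    (hvs : vs = qInt d * ofLaurentCoeffs cs / qInt ℓ)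
    (hvpos : ∀ s : ℤ, s < 0 → v.coeff s = 0)
    (hvspos : ∀ s : ℤ, s < 0 → vs.coeff s = 0)
    (m : ℤ → ℚ)
    (hp : (qPow (2 * (d : ℤ)) - 1) / (qPow (2 * (ℓ : ℤ)) - 1) *
        (qPow (ℓ : ℤ) * ofLaurentCoeffs c + ofLaurentCoeffs cs) =
      ∑ r ∈ Finset.Icc ((d' : ℤ) - (d : ℤ)) ((ℓ : ℤ) - (d' : ℤ) - (d : ℤ)),
        HahnSeries.single (-r) (m r)) :
    ∀ r : ℤ, (d' : ℤ) - (d : ℤ) ≤ r → r ≤ (ℓ : ℤ) - (d' : ℤ) - (d : ℤ) →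
      m r = v.coeff (r + (d : ℤ)) ∧ m r = vs.coeff ((ℓ : ℤ) - (d : ℤ) - r) := by
  have hY : qPow (2*(ℓ:ℤ)) - 1 ≠ 0 := by
    rw [qPow_two]
    exact mul_ne_zero (qPow_ne_zero _)
      (mul_ne_zero (qPow_sub_ne _ _ (by omega)) (qInt_ne_zero ℓ hℓ))
  rw [div_mul_eq_mul_div, div_eq_iff hY] at hp
  intro r hr1 hr2
  constructor
  · have hB := reversal ℓ d d' c cs hc hcs m hp
    have h1 := aux ℓ d d' hℓ hd hd' cs c vs v hvs hv hvspos
      (fun r => m ((ℓ:ℤ)-2*(d:ℤ)-r)) hB ((ℓ:ℤ)-2*(d:ℤ)-r) (by omega) (by omega)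
    rw [show ((ℓ:ℤ)-2*(d:ℤ)-((ℓ:ℤ)-2*(d:ℤ)-r)) = r from by ring,
      show ((ℓ:ℤ)-(d:ℤ)-((ℓ:ℤ)-2*(d:ℤ)-r)) = r + (d:ℤ) from by ring] at h1
    exact h1
  · exact aux ℓ d d' hℓ hd hd' c cs v vs hv hvs hvpos m hp r hr1 hr2

end
end

section
/- Fix an integer n ≥ 2 and integers i, j with 1 ≤ i, j ≤ n − 1. Then the following identity holds in the ring ℤ[q, q⁻¹] of Laurent polynomials: (q² − 1)·(c_{i,n−j}(q) + qⁿ·c_{ij}(q)) = (q^{2n} − 1)·Σ_{b = max(i+j+1−n, 1)}^{min(i, j)} q^{2b − (i+j)}, where c_{kl}(q) := [n − max(k,l)]_q·[min(k,l)]_q. -/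
noncomputable section

open LaurentPolynomial

/-- The quantum integer `[m]_q = Σ_{k=0}^{m−1} q^{m−1−2k}` as a Laurent polynomial. -/
def qIntL (m : ℕ) : LaurentPolynomial ℤ :=
  ∑ k ∈ Finset.range m, T ((m : ℤ) - 1 - 2 * (k : ℤ))

/-- The entries `c_{kl}(q) = [n − max(k,l)]_q · [min(k,l)]_q` of `[n]_q·B(q)⁻¹` for `sl_n`. -/
def cEntry (n k l : ℕ) : LaurentPolynomial ℤ :=
  qIntL (n - max k l) * qIntL (min k l)

lemma s_mul_qIntL (m : ℕ) :
    (T 1 - T (-1) : LaurentPolynomial ℤ) * qIntL m = T (m : ℤ) - T (-(m : ℤ)) := by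
  rw [qIntL, Finset.mul_sum]
  have h : ∀ k ∈ Finset.range m, (T 1 - T (-1) : LaurentPolynomial ℤ) * T ((m:ℤ) - 1 - 2*(k:ℤ))
      = T ((m:ℤ) - 2*(k:ℤ)) - T ((m:ℤ) - 2*((k:ℤ)+1)) := by
    intro k _
    rw [sub_mul, ← T_add, ← T_add]
    ring_nf
  rw [Finset.sum_congr rfl h]
  have h3 := Finset.sum_range_sub' (fun k : ℕ => (T ((m:ℤ) - 2*(k:ℤ)) : LaurentPolynomial ℤ)) m
  push_cast at h3 ⊢
  rw [h3]
  norm_num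
  ring_nf

lemma s_ne_zero : (T 1 - T (-1) : LaurentPolynomial ℤ) ≠ 0 := by
  intro h
  rw [sub_eq_zero] at h
  have h2 : (Finsupp.single (1:ℤ) (1:ℤ)) = Finsupp.single (-1:ℤ) (1:ℤ) := congrArg AddMonoidAlgebra.coeff h
  rw [Finsupp.single_eq_single_iff] at h2
  omega

lemma s_mul_geom (L U : ℕ) (c : ℤ) (h : L ≤ U) :
    (T 1 - T (-1) : LaurentPolynomial ℤ) * ∑ b ∈ Finset.Icc L U, T (2*(b:ℤ) - c) =
      T (2*(U:ℤ)+1-c) - T (2*(L:ℤ)-1-c) := by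
  rw [← Finset.Ico_add_one_right_eq_Icc, Finset.sum_Ico_eq_sum_range, Finset.mul_sum]
  have h2 : ∀ k ∈ Finset.range (U + 1 - L),
      (T 1 - T (-1) : LaurentPolynomial ℤ) * T (2*((L + k : ℕ):ℤ) - c)
      = T (2*(L:ℤ) + 2*((k:ℤ)+1) - 1 - c) - T (2*(L:ℤ) + 2*(k:ℤ) - 1 - c) := by
    intro k _
    rw [sub_mul, ← T_add, ← T_add]
    push_cast
    ring_nf
  rw [Finset.sum_congr rfl h2]
  have h3 := Finset.sum_range_sub (fun k : ℕ => (T (2*(L:ℤ) + 2*(k:ℤ) - 1 - c) : LaurentPolynomial ℤ)) (U + 1 - L)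
  push_cast at h3 ⊢
  rw [h3, Nat.cast_sub (by omega), Nat.cast_add]
  push_cast
  ring_nf

theorem laurent_identity_sln
    (n i j : ℕ) (hn : 2 ≤ n) (hi₁ : 1 ≤ i) (hi₂ : i ≤ n - 1) (hj₁ : 1 ≤ j) (hj₂ : j ≤ n - 1) :
    (T 2 - 1) * (cEntry n i (n - j) + T (n : ℤ) * cEntry n i j) =
      (T (2 * (n : ℤ)) - 1) *
        ∑ b ∈ Finset.Icc (max (i + j + 1 - n) 1) (min i j),
          T (2 * (b : ℤ) - ((i : ℤ) + (j : ℤ))) := by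
  set s : LaurentPolynomial ℤ := T 1 - T (-1) with hs
  apply mul_left_cancel₀ (mul_ne_zero s_ne_zero s_ne_zero : s * s ≠ 0)
  have hL : max (i + j + 1 - n) 1 ≤ min i j := by omega
  have expand : ∀ a b : ℕ, s * s * (qIntL a * qIntL b) =
      (T (a:ℤ) - T (-(a:ℤ))) * (T (b:ℤ) - T (-(b:ℤ))) := by
    intro a b
    calc s * s * (qIntL a * qIntL b) = (s * qIntL a) * (s * qIntL b) := by ring
    _ = _ := by rw [s_mul_qIntL, s_mul_qIntL]
  have RHS : s * s * ((T (2 * (n : ℤ)) - 1) *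
        ∑ b ∈ Finset.Icc (max (i + j + 1 - n) 1) (min i j),
          T (2 * (b : ℤ) - ((i : ℤ) + (j : ℤ)))) =
      (T (2 * (n : ℤ)) - 1) * s *
        (T (2*((min i j : ℕ):ℤ)+1-((i:ℤ)+(j:ℤ))) - T (2*((max (i + j + 1 - n) 1 : ℕ):ℤ)-1-((i:ℤ)+(j:ℤ)))) := by
    calc s * s * ((T (2 * (n : ℤ)) - 1) * ∑ b ∈ Finset.Icc (max (i + j + 1 - n) 1) (min i j),
          T (2 * (b : ℤ) - ((i : ℤ) + (j : ℤ)))) =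
        (T (2 * (n : ℤ)) - 1) * s * (s * ∑ b ∈ Finset.Icc (max (i + j + 1 - n) 1) (min i j),
          T (2 * (b : ℤ) - ((i : ℤ) + (j : ℤ)))) := by ring
    _ = _ := by rw [s_mul_geom _ _ _ hL]
  rw [RHS]
  rw [cEntry, cEntry]
  have LHS : s * s * ((T 2 - 1) * (qIntL (n - max i (n - j)) * qIntL (min i (n - j)) +
        T (n:ℤ) * (qIntL (n - max i j) * qIntL (min i j)))) =
      (T 2 - 1) * ((s * s * (qIntL (n - max i (n - j)) * qIntL (min i (n - j)))) +
        T (n:ℤ) * (s * s * (qIntL (n - max i j) * qIntL (min i j)))) := by ring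
  rw [LHS, expand, expand]
  rcases le_total i j with hij | hij <;> rcases le_or_gt (i + j) n with hijn | hijn
  · -- i ≤ j, i+j ≤ n
    rw [show n - max i (n - j) = j by omega, show min i (n - j) = i by omega,
        show n - max i j = n - j by omega, show min i j = i by omega,
        show max (i + j + 1 - n) 1 = 1 by omega, Nat.cast_sub (by omega)]
    push_cast
    simp only [hs, mul_sub, sub_mul, mul_add, add_mul, ← T_add, one_mul, mul_one]
    ring_nf
  · -- i ≤ j, i+j > n
    rw [show n - max i (n - j) = n - i by omega, show min i (n - j) = n - j by omega,
        show n - max i j = n - j by omega, show min i j = i by omega,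
        show max (i + j + 1 - n) 1 = i + j + 1 - n by omega,
        show ((n - i:ℕ):ℤ) = n - i by omega, show ((n - j:ℕ):ℤ) = n - j by omega,
        show ((i + j + 1 - n:ℕ):ℤ) = i + j + 1 - n by omega]
    simp only [hs, mul_sub, sub_mul, mul_add, add_mul, ← T_add, one_mul, mul_one]
    ring_nf
  · -- j ≤ i, i+j ≤ n
    rw [show n - max i (n - j) = j by omega, show min i (n - j) = i by omega,
        show n - max i j = n - i by omega, show min i j = j by omega,
        show max (i + j + 1 - n) 1 = 1 by omega,
        show ((n - i:ℕ):ℤ) = n - i by omega]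
    push_cast
    simp only [hs, mul_sub, sub_mul, mul_add, add_mul, ← T_add, one_mul, mul_one]
    ring_nf
  · -- j ≤ i, i+j > n
    rw [show n - max i (n - j) = n - i by omega, show min i (n - j) = n - j by omega,
        show n - max i j = n - i by omega, show min i j = j by omega,
        show max (i + j + 1 - n) 1 = i + j + 1 - n by omega,
        show ((n - i:ℕ):ℤ) = n - i by omega, show ((n - j:ℕ):ℤ) = n - j by omega,
        show ((i + j + 1 - n:ℕ):ℤ) = i + j + 1 - n by omega]
    simp only [hs, mul_sub, sub_mul, mul_add, add_mul, ← T_add, one_mul, mul_one]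
    ring_nf
end
end
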